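/- arXiv:2104.08831 — 8 statements merged into one kernel-verified Lean document; each statement's English description precedes it below -/
import Mathlib

section
/- For all s, t ≥ 0, one has min(s^{1+a₀}, s^{1+a₁})·A(t)/(1 + a₁) ≤ A(s·t) ≤ (1 + a₁)·max(s^{1+a₀}, s^{1+a₁})·A(t). -/
open Real MeasureTheory

/-- Transfer lemma for rpow weights. -/
private lemma rpow_transfer_le {u w c v q : ℝ} (hv : 0 < v) (hc : 0 < c)
    (h : u * (c * v) ^ (-q) ≤ w * v ^ (-q)) : u ≤ c ^ q * w := by
  have hcv : 0 < c * v := mul_pos hc hv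
  have e1 : (c * v) ^ (-q) * (c * v) ^ q = 1 := by
    rw [← Real.rpow_add hcv]; simp
  have e2 : v ^ (-q) * v ^ q = 1 := by
    rw [← Real.rpow_add hv]; simp
  have h3 : u * (c * v) ^ (-q) * (c * v) ^ q ≤ w * v ^ (-q) * (c * v) ^ q :=
    mul_le_mul_of_nonneg_right h (Real.rpow_nonneg hcv.le _)
  calc u = u * ((c * v) ^ (-q) * (c * v) ^ q) := by rw [e1, mul_one]
    _ = u * (c * v) ^ (-q) * (c * v) ^ q := by ring
    _ ≤ w * v ^ (-q) * (c * v) ^ q := h3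
    _ = c ^ q * w * (v ^ (-q) * v ^ q) := by
        rw [Real.mul_rpow hc.le hv.le]; ring
    _ = c ^ q * w := by rw [e2, mul_one]

private lemma rpow_transfer_ge {u w c v q : ℝ} (hv : 0 < v) (hc : 0 < c)
    (h : w * v ^ (-q) ≤ u * (c * v) ^ (-q)) : c ^ q * w ≤ u := by
  have hcv : 0 < c * v := mul_pos hc hv
  have e1 : (c * v) ^ (-q) * (c * v) ^ q = 1 := by
    rw [← Real.rpow_add hcv]; simp
  have e2 : v ^ (-q) * v ^ q = 1 := by
    rw [← Real.rpow_add hv]; simp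
  have h3 : w * v ^ (-q) * (c * v) ^ q ≤ u * (c * v) ^ (-q) * (c * v) ^ q :=
    mul_le_mul_of_nonneg_right h (Real.rpow_nonneg hcv.le _)
  calc c ^ q * w = c ^ q * w * (v ^ (-q) * v ^ q) := by rw [e2, mul_one]
    _ = w * v ^ (-q) * (c * v) ^ q := by
        rw [Real.mul_rpow hc.le hv.le]; ring
    _ ≤ u * (c * v) ^ (-q) * (c * v) ^ q := h3
    _ = u * ((c * v) ^ (-q) * (c * v) ^ q) := by ring
    _ = u := by rw [e1, mul_one]

private lemma aux_deriv (a : ℝ → ℝ) (p : ℝ)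
    (ha_diff : ∀ t ∈ Set.Ioi (0:ℝ), DifferentiableAt ℝ a t)
    {x : ℝ} (hx : 0 < x) :
    HasDerivAt (fun t => a t * t ^ (-p))
      (x ^ (-p - 1) * (x * deriv a x - p * a x)) x := by
  have h1 : HasDerivAt (fun t : ℝ => t ^ (-p)) (-p * x ^ (-p - 1)) x :=
    Real.hasDerivAt_rpow_const (Or.inl (ne_of_gt hx))
  have h2 := ((ha_diff x hx).hasDerivAt).mul h1
  have hxp : x ^ (-p) = x ^ (-p - 1) * x := by
    rw [← Real.rpow_add_one (ne_of_gt hx)]; ring_nf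
  have h3 : HasDerivAt (fun t => a t * t ^ (-p))
      (deriv a x * x ^ (-p) + a x * (-p * x ^ (-p - 1))) x := h2
  convert h3 using 1
  rw [hxp]; ring

private lemma aux_anti (a : ℝ → ℝ) (p : ℝ)
    (ha_cont : ContinuousOn a (Set.Ici 0))
    (ha_diff : ∀ t ∈ Set.Ioi (0:ℝ), DifferentiableAt ℝ a t)
    (hp : ∀ t ∈ Set.Ioi (0:ℝ), t * deriv a t ≤ p * a t) :
    AntitoneOn (fun t => a t * t ^ (-p)) (Set.Ioi (0:ℝ)) := by
  apply antitoneOn_of_deriv_nonpos (convex_Ioi 0)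
  · apply ContinuousOn.mul (ha_cont.mono (Set.Ioi_subset_Ici le_rfl))
    intro x hx
    exact (Real.continuousAt_rpow_const x (-p) (Or.inl (ne_of_gt hx))).continuousWithinAt
  · intro x hx
    rw [interior_Ioi] at hx
    exact (aux_deriv a p ha_diff hx).differentiableAt.differentiableWithinAt
  · intro x hx
    rw [interior_Ioi] at hx
    rw [(aux_deriv a p ha_diff hx).deriv]
    exact mul_nonpos_of_nonneg_of_nonpos (Real.rpow_nonneg hx.le _)
      (sub_nonpos.2 (hp x hx))

private lemma aux_mono (a : ℝ → ℝ) (p : ℝ)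
    (ha_cont : ContinuousOn a (Set.Ici 0))
    (ha_diff : ∀ t ∈ Set.Ioi (0:ℝ), DifferentiableAt ℝ a t)
    (hp : ∀ t ∈ Set.Ioi (0:ℝ), p * a t ≤ t * deriv a t) :
    MonotoneOn (fun t => a t * t ^ (-p)) (Set.Ioi (0:ℝ)) := by
  apply monotoneOn_of_deriv_nonneg (convex_Ioi 0)
  · apply ContinuousOn.mul (ha_cont.mono (Set.Ioi_subset_Ici le_rfl))
    intro x hx
    exact (Real.continuousAt_rpow_const x (-p) (Or.inl (ne_of_gt hx))).continuousWithinAt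
  · intro x hx
    rw [interior_Ioi] at hx
    exact (aux_deriv a p ha_diff hx).differentiableAt.differentiableWithinAt
  · intro x hx
    rw [interior_Ioi] at hx
    rw [(aux_deriv a p ha_diff hx).deriv]
    exact mul_nonneg (Real.rpow_nonneg hx.le _) (sub_nonneg.2 (hp x hx))

/-- Inequality (1.5): for all `s, t ≥ 0`,
`min(s^{1+a₀}, s^{1+a₁})·A(t)/(1+a₁) ≤ A(s·t) ≤ (1+a₁)·max(s^{1+a₀}, s^{1+a₁})·A(t)`. -/
theorem stmt_3
    (a : ℝ → ℝ) (a₀ a₁ : ℝ)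
    (ha_cont : ContinuousOn a (Set.Ici 0))
    (ha_diff : ∀ t ∈ Set.Ioi (0:ℝ), DifferentiableAt ℝ a t)
    (ha_deriv_cont : ContinuousOn (deriv a) (Set.Ioi 0))
    (ha_zero : a 0 = 0)
    (ha_pos : ∀ t > 0, 0 < a t)
    (ha₀_pos : 0 < a₀) (ha₀_lt : a₀ < 1) (ha₁_gt : 1 < a₁)
    (hcond : ∀ t > 0, a₀ ≤ t * deriv a t / a t ∧ t * deriv a t / a t ≤ a₁)
    (A : ℝ → ℝ) (hA : ∀ t, A t = ∫ s in (0:ℝ)..t, a s) :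
    ∀ s ≥ (0:ℝ), ∀ t ≥ (0:ℝ),
      min (s ^ (1 + a₀)) (s ^ (1 + a₁)) * A t / (1 + a₁) ≤ A (s * t) ∧
      A (s * t) ≤ (1 + a₁) * max (s ^ (1 + a₀)) (s ^ (1 + a₁)) * A t := by
  have ha₁_pos : (0:ℝ) < 1 + a₁ := by linarith
  have hA0 : A 0 = 0 := by rw [hA]; simp
  -- a is nonnegative on [0,∞)
  have ha_nonneg : ∀ v : ℝ, 0 ≤ v → 0 ≤ a v := by
    intro v hv
    rcases eq_or_lt_of_le hv with h | h
    · rw [← h, ha_zero]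
    · exact (ha_pos v h).le
  -- A is nonnegative
  have hA_nonneg : ∀ t : ℝ, 0 ≤ t → 0 ≤ A t := by
    intro t ht
    rw [hA]
    exact intervalIntegral.integral_nonneg ht (fun u hu => ha_nonneg u hu.1)
  -- the two differential inequalities
  have hup : ∀ v ∈ Set.Ioi (0:ℝ), v * deriv a v ≤ a₁ * a v := by
    intro v hv
    have := (hcond v hv).2
    have hav := ha_pos v hv
    rw [div_le_iff₀ hav] at this; linarith
  have hlow : ∀ v ∈ Set.Ioi (0:ℝ), a₀ * a v ≤ v * deriv a v := by
    intro v hv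
    have := (hcond v hv).1
    have hav := ha_pos v hv
    rw [le_div_iff₀ hav] at this; linarith
  have hanti := aux_anti a a₁ ha_cont ha_diff hup
  have hmono := aux_mono a a₀ ha_cont ha_diff hlow
  -- pointwise comparison lemma
  have key : ∀ s : ℝ, 0 < s → ∀ v : ℝ, 0 < v →
      min (s ^ a₀) (s ^ a₁) * a v ≤ a (s * v) ∧
      a (s * v) ≤ max (s ^ a₀) (s ^ a₁) * a v := by
    intro s hs v hv
    have hsv : (0:ℝ) < s * v := mul_pos hs hv
    have ha01 : a₀ ≤ a₁ := by linarith
    rcases le_total 1 s with hs1 | hs1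
    · -- s ≥ 1 : v ≤ s*v
      have hvsv : v ≤ s * v := le_mul_of_one_le_left hv.le hs1
      have h1 : a (s * v) * (s * v) ^ (-a₁) ≤ a v * v ^ (-a₁) :=
        hanti hv hsv hvsv
      have h2 : a v * v ^ (-a₀) ≤ a (s * v) * (s * v) ^ (-a₀) :=
        hmono hv hsv hvsv
      have hub : a (s * v) ≤ s ^ a₁ * a v := rpow_transfer_le hv hs h1
      have hlb : s ^ a₀ * a v ≤ a (s * v) := rpow_transfer_ge hv hs h2
      have hle : s ^ a₀ ≤ s ^ a₁ := Real.rpow_le_rpow_of_exponent_le hs1 ha01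
      rw [min_eq_left hle, max_eq_right hle]
      exact ⟨hlb, hub⟩
    · -- s ≤ 1 : s*v ≤ v
      have hvsv : s * v ≤ v := mul_le_of_le_one_left hv.le hs1
      have h1 : a v * v ^ (-a₁) ≤ a (s * v) * (s * v) ^ (-a₁) :=
        hanti hsv hv hvsv
      have h2 : a (s * v) * (s * v) ^ (-a₀) ≤ a v * v ^ (-a₀) :=
        hmono hsv hv hvsv
      have hlb : s ^ a₁ * a v ≤ a (s * v) := rpow_transfer_ge hv hs h1
      have hub : a (s * v) ≤ s ^ a₀ * a v := rpow_transfer_le hv hs h2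
      have hle : s ^ a₁ ≤ s ^ a₀ := Real.rpow_le_rpow_of_exponent_ge hs hs1 ha01
      rw [min_eq_right hle, max_eq_left hle]
      exact ⟨hlb, hub⟩
  intro s hs t ht
  rcases eq_or_lt_of_le hs with hs0 | hs0
  · -- s = 0
    subst hs0
    rw [Real.zero_rpow (by linarith : (1:ℝ) + a₀ ≠ 0),
      Real.zero_rpow (by linarith : (1:ℝ) + a₁ ≠ 0), zero_mul, hA0]
    simp
  rcases eq_or_lt_of_le ht with ht0 | ht0
  · subst ht0
    rw [mul_zero, hA0]
    constructor
    · simp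
    · positivity
  -- main case : 0 < s, 0 < t
  -- substitution: A (s*t) = s * ∫ v in 0..t, a (s*v)
  have hsub : A (s * t) = s * ∫ v in (0:ℝ)..t, a (s * v) := by
    rw [hA]
    have := intervalIntegral.smul_integral_comp_mul_left a s (a := (0:ℝ)) (b := t)
    rw [mul_zero] at this
    rw [← this]
    simp
  -- integrability
  have hIcc : Set.uIcc (0:ℝ) t = Set.Icc 0 t := Set.uIcc_of_le ht
  have hInt1 : IntervalIntegrable (fun v => a (s * v)) volume 0 t := by
    apply ContinuousOn.intervalIntegrable
    rw [hIcc]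
    apply ha_cont.comp (continuous_const.mul continuous_id).continuousOn
    intro v hv
    exact mul_nonneg hs0.le hv.1
  have hInt2 : IntervalIntegrable a volume 0 t := by
    apply ContinuousOn.intervalIntegrable
    rw [hIcc]
    exact ha_cont.mono (fun v hv => hv.1)
  have hIntMax : IntervalIntegrable (fun v => max (s ^ a₀) (s ^ a₁) * a v) volume 0 t :=
    hInt2.const_mul _
  have hIntMin : IntervalIntegrable (fun v => min (s ^ a₀) (s ^ a₁) * a v) volume 0 t :=
    hInt2.const_mul _
  -- integral comparisons
  have hub : (∫ v in (0:ℝ)..t, a (s * v)) ≤ max (s ^ a₀) (s ^ a₁) * A t := by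
    rw [hA, ← intervalIntegral.integral_const_mul]
    apply intervalIntegral.integral_mono_on ht hInt1 hIntMax
    intro v hv
    rcases eq_or_lt_of_le hv.1 with h | h
    · subst h; simp [ha_zero]
    · exact (key s hs0 v h).2
  have hlb : min (s ^ a₀) (s ^ a₁) * A t ≤ ∫ v in (0:ℝ)..t, a (s * v) := by
    rw [hA, ← intervalIntegral.integral_const_mul]
    apply intervalIntegral.integral_mono_on ht hIntMin hInt1
    intro v hv
    rcases eq_or_lt_of_le hv.1 with h | h
    · subst h; simp [ha_zero]
    · exact (key s hs0 v h).1
  -- rpow algebra : s * s^p = s^(1+p)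
  have hpow : ∀ p : ℝ, s * s ^ p = s ^ (1 + p) := by
    intro p
    rw [Real.rpow_add hs0, Real.rpow_one]
  have hmaxmul : s * max (s ^ a₀) (s ^ a₁) = max (s ^ (1 + a₀)) (s ^ (1 + a₁)) := by
    rw [mul_max_of_nonneg _ _ hs0.le, hpow, hpow]
  have hminmul : s * min (s ^ a₀) (s ^ a₁) = min (s ^ (1 + a₀)) (s ^ (1 + a₁)) := by
    rw [mul_min_of_nonneg _ _ hs0.le, hpow, hpow]
  have hAt := hA_nonneg t ht
  have hmax_nonneg : 0 ≤ max (s ^ (1 + a₀)) (s ^ (1 + a₁)) :=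
    le_max_of_le_left (Real.rpow_nonneg hs0.le _)
  have hmin_nonneg : 0 ≤ min (s ^ (1 + a₀)) (s ^ (1 + a₁)) :=
    le_min (Real.rpow_nonneg hs0.le _) (Real.rpow_nonneg hs0.le _)
  constructor
  · -- lower bound
    have h1 : min (s ^ (1 + a₀)) (s ^ (1 + a₁)) * A t ≤ A (s * t) := by
      rw [hsub, ← hminmul]
      calc s * min (s ^ a₀) (s ^ a₁) * A t
          = s * (min (s ^ a₀) (s ^ a₁) * A t) := by ring
        _ ≤ s * ∫ v in (0:ℝ)..t, a (s * v) :=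
            mul_le_mul_of_nonneg_left hlb hs0.le
    have h0 : 0 ≤ min (s ^ (1 + a₀)) (s ^ (1 + a₁)) * A t :=
      mul_nonneg hmin_nonneg hAt
    calc min (s ^ (1 + a₀)) (s ^ (1 + a₁)) * A t / (1 + a₁)
        ≤ min (s ^ (1 + a₀)) (s ^ (1 + a₁)) * A t := by
          rw [div_le_iff₀ ha₁_pos]
          nlinarith
      _ ≤ A (s * t) := h1
  · -- upper bound
    have h1 : A (s * t) ≤ max (s ^ (1 + a₀)) (s ^ (1 + a₁)) * A t := by
      rw [hsub, ← hmaxmul]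
      calc s * ∫ v in (0:ℝ)..t, a (s * v)
          ≤ s * (max (s ^ a₀) (s ^ a₁) * A t) :=
            mul_le_mul_of_nonneg_left hub hs0.le
        _ = s * max (s ^ a₀) (s ^ a₁) * A t := by ring
    have h0 : 0 ≤ max (s ^ (1 + a₀)) (s ^ (1 + a₁)) * A t :=
      mul_nonneg hmax_nonneg hAt
    calc A (s * t) ≤ max (s ^ (1 + a₀)) (s ^ (1 + a₁)) * A t := h1
      _ ≤ (1 + a₁) * max (s ^ (1 + a₀)) (s ^ (1 + a₁)) * A t := by nlinarith
end

section
/- Let φ ∈ C¹((0,∞)) ∩ C⁰([0,∞)) with φ(0) = 0 and φ(t) > 0 for t > 0 satisfy c₀ ≤ t·φ'(t)/φ(t) ≤ c₁ for all t > 0, with constants 0 < c₀ ≤ c₁, and set Φ(t) = ∫₀ᵗ φ(s) ds. Define b(t) = φ(A(t))·a(t), which is the derivative of the composite function B = Φ ∘ A. Then there exist constants 0 < b₀ ≤ b₁ (for instance b₀ = c₀ + a₀ and b₁ = c₁(1 + a₁) + a₁) such that b₀ ≤ t·b'(t)/b(t) ≤ b₁ for all t > 0; that is, the composition B = Φ ∘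 A again satisfies condition (1.1). -/
open Real MeasureTheory

/-- Remark 1.1 (i): if `φ` satisfies condition (1.1) (with constants `c₀ ≤ c₁`) and `a`
satisfies condition (1.1) (with constants `a₀ < 1 < a₁`), then the derivative
`b(t) = φ(A(t))·a(t)` of the composition `B = Φ ∘ A` again satisfies condition (1.1),
for suitable constants `0 < b₀ ≤ b₁`. -/
theorem stmt_5
    (a : ℝ → ℝ) (a₀ a₁ : ℝ)
    (ha_cont : ContinuousOn a (Set.Ici 0))
    (ha_diff : ∀ t ∈ Set.Ioi (0:ℝ), DifferentiableAt ℝ a t)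
    (ha_deriv_cont : ContinuousOn (deriv a) (Set.Ioi 0))
    (ha_zero : a 0 = 0)
    (ha_pos : ∀ t > 0, 0 < a t)
    (ha₀_pos : 0 < a₀) (ha₀_lt : a₀ < 1) (ha₁_gt : 1 < a₁)
    (hconda : ∀ t > 0, a₀ ≤ t * deriv a t / a t ∧ t * deriv a t / a t ≤ a₁)
    (A : ℝ → ℝ) (hA : ∀ t, A t = ∫ s in (0:ℝ)..t, a s)
    (φ : ℝ → ℝ) (c₀ c₁ : ℝ)
    (hφ_cont : ContinuousOn φ (Set.Ici 0))
    (hφ_diff : ∀ t ∈ Set.Ioi (0:ℝ), DifferentiableAt ℝ φ t)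
    (hφ_deriv_cont : ContinuousOn (deriv φ) (Set.Ioi 0))
    (hφ_zero : φ 0 = 0)
    (hφ_pos : ∀ t > 0, 0 < φ t)
    (hc₀_pos : 0 < c₀) (hc₀c₁ : c₀ ≤ c₁)
    (hcondφ : ∀ t > 0, c₀ ≤ t * deriv φ t / φ t ∧ t * deriv φ t / φ t ≤ c₁)
    (Φ : ℝ → ℝ) (hΦ : ∀ t, Φ t = ∫ s in (0:ℝ)..t, φ s)
    (b : ℝ → ℝ) (hb : ∀ t, b t = φ (A t) * a t) :
    (∀ t > 0, HasDerivAt (fun s => Φ (A s)) (b t) t) ∧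
    ∃ b₀ b₁ : ℝ, 0 < b₀ ∧ b₀ ≤ b₁ ∧
      ∀ t > 0, b₀ ≤ t * deriv b t / b t ∧ t * deriv b t / b t ≤ b₁ := by
  have hAfun : A = fun u => ∫ s in (0:ℝ)..u, a s := funext hA
  have hΦfun : Φ = fun u => ∫ s in (0:ℝ)..u, φ s := funext hΦ
  have hbfun : b = fun s => φ (A s) * a s := funext hb
  -- interval integrability of a and φ
  have haInt : ∀ t : ℝ, 0 ≤ t → IntervalIntegrable a MeasureTheory.volume 0 t := by
    intro t ht
    apply ContinuousOn.intervalIntegrable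
    refine ha_cont.mono ?_
    rw [Set.uIcc_of_le ht]
    exact fun x hx => hx.1
  have hφInt : ∀ t : ℝ, 0 ≤ t → IntervalIntegrable φ MeasureTheory.volume 0 t := by
    intro t ht
    apply ContinuousOn.intervalIntegrable
    refine hφ_cont.mono ?_
    rw [Set.uIcc_of_le ht]
    exact fun x hx => hx.1
  -- A has derivative a t at t > 0
  have hAderiv : ∀ t > 0, HasDerivAt A (a t) t := by
    intro t ht
    rw [hAfun]
    refine intervalIntegral.integral_hasDerivAt_right (haInt t ht.le) ?_ ?_
    · exact (ha_cont.mono Set.Ioi_subset_Ici_self).stronglyMeasurableAtFilter isOpen_Ioi t ht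
    · exact ha_cont.continuousAt (Ici_mem_nhds ht)
  -- A is positive on positives
  have hApos : ∀ t > 0, 0 < A t := by
    intro t ht
    rw [hA]
    exact intervalIntegral.intervalIntegral_pos_of_pos_on (haInt t ht.le)
      (fun x hx => ha_pos x hx.1) ht
  have hA0 : A 0 = 0 := by rw [hA]; simp
  -- key bounds: (1+a₀) A t ≤ t a t ≤ (1+a₁) A t for t > 0
  have hkey : ∀ t > 0, (1 + a₀) * A t ≤ t * a t ∧ t * a t ≤ (1 + a₁) * A t := by
    intro T hT
    have hIcc : Set.Icc (0:ℝ) T ⊆ Set.Ici 0 := fun x hx => hx.1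
    have hAcont : ContinuousOn A (Set.Icc 0 T) := by
      rw [hAfun]
      have h1 : IntegrableOn a (Set.uIcc 0 T) MeasureTheory.volume := by
        rw [Set.uIcc_of_le hT.le]
        exact (ha_cont.mono hIcc).integrableOn_compact isCompact_Icc
      have := intervalIntegral.continuousOn_primitive_interval h1
      rwa [Set.uIcc_of_le hT.le] at this
    have hFcont : ∀ c : ℝ, ContinuousOn (fun s => s * a s - c * A s) (Set.Icc 0 T) := by
      intro c
      exact (continuousOn_id.mul (ha_cont.mono hIcc)).sub (continuousOn_const.mul hAcont)
    have hint : interior (Set.Icc (0:ℝ) T) = Set.Ioo 0 T := interior_Icc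
    have hFd : ∀ c : ℝ, ∀ x ∈ Set.Ioo (0:ℝ) T,
        HasDerivAt (fun s => s * a s - c * A s)
          (1 * a x + x * deriv a x - c * a x) x := by
      intro c x hx
      exact ((hasDerivAt_id x).mul ((ha_diff x hx.1).hasDerivAt)).sub
        ((hAderiv x hx.1).const_mul c)
    constructor
    · -- monotone: G = s a s - (1+a₀) A s, G' ≥ 0
      have hmono : MonotoneOn (fun s => s * a s - (1 + a₀) * A s) (Set.Icc 0 T) := by
        apply monotoneOn_of_deriv_nonneg (convex_Icc 0 T) (hFcont _)
        · rw [hint]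
          intro x hx
          exact ((hFd (1 + a₀) x hx).differentiableAt).differentiableWithinAt
        · rw [hint]
          intro x hx
          rw [(hFd (1 + a₀) x hx).deriv]
          have hax := ha_pos x hx.1
          have h1 : a₀ ≤ x * deriv a x / a x := (hconda x hx.1).1
          rw [le_div_iff₀ hax] at h1
          nlinarith
      have := hmono (Set.left_mem_Icc.mpr hT.le) (Set.right_mem_Icc.mpr hT.le) hT.le
      simp only [zero_mul, hA0, mul_zero, sub_zero, zero_sub] at this
      linarith
    · -- antitone: F = s a s - (1+a₁) A s, F' ≤ 0
      have hanti : AntitoneOn (fun s => s * a s - (1 + a₁) * A s) (Set.Icc 0 T) := by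
        apply antitoneOn_of_deriv_nonpos (convex_Icc 0 T) (hFcont _)
        · rw [hint]
          intro x hx
          exact ((hFd (1 + a₁) x hx).differentiableAt).differentiableWithinAt
        · rw [hint]
          intro x hx
          rw [(hFd (1 + a₁) x hx).deriv]
          have hax := ha_pos x hx.1
          have h1 : x * deriv a x / a x ≤ a₁ := (hconda x hx.1).2
          rw [div_le_iff₀ hax] at h1
          nlinarith
      have := hanti (Set.left_mem_Icc.mpr hT.le) (Set.right_mem_Icc.mpr hT.le) hT.le
      simp only [zero_mul, hA0, mul_zero, sub_zero, zero_sub] at this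
      linarith
  -- b has derivative
  have hbderiv : ∀ t > 0, HasDerivAt b
      (deriv φ (A t) * a t * a t + φ (A t) * deriv a t) t := by
    intro t ht
    rw [hbfun]
    have h1 : HasDerivAt (fun s => φ (A s)) (deriv φ (A t) * a t) t :=
      HasDerivAt.comp t ((hφ_diff (A t) (hApos t ht)).hasDerivAt) (hAderiv t ht)
    exact h1.mul ((ha_diff t ht).hasDerivAt)
  constructor
  · -- part 1: Φ ∘ A has derivative b t
    intro t ht
    have hΦd : HasDerivAt Φ (φ (A t)) (A t) := by
      rw [hΦfun]
      refine intervalIntegral.integral_hasDerivAt_right (hφInt (A t) (hApos t ht).le) ?_ ?_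
      · exact (hφ_cont.mono Set.Ioi_subset_Ici_self).stronglyMeasurableAtFilter isOpen_Ioi
          (A t) (hApos t ht)
      · exact hφ_cont.continuousAt (Ici_mem_nhds (hApos t ht))
    rw [hb]
    exact HasDerivAt.comp t hΦd (hAderiv t ht)
  · refine ⟨c₀ * (1 + a₀) + a₀, c₁ * (1 + a₁) + a₁, by nlinarith, by nlinarith, ?_⟩
    intro t ht
    have hu : 0 < A t := hApos t ht
    have hat : 0 < a t := ha_pos t ht
    have hφu : 0 < φ (A t) := hφ_pos (A t) hu
    have hq := hcondφ (A t) hu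
    have hr := hconda t ht
    have hp := hkey t ht
    have hdb : deriv b t = deriv φ (A t) * a t * a t + φ (A t) * deriv a t :=
      (hbderiv t ht).deriv
    have hbt : b t = φ (A t) * a t := hb t
    have heq : t * deriv b t / b t =
        (A t * deriv φ (A t) / φ (A t)) * (t * a t / A t) + t * deriv a t / a t := by
      rw [hdb, hbt]
      field_simp
    rw [heq]
    have hq1 : c₀ ≤ A t * deriv φ (A t) / φ (A t) := hq.1
    have hq2 : A t * deriv φ (A t) / φ (A t) ≤ c₁ := hq.2
    have hp1 : 1 + a₀ ≤ t * a t / A t := by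
      rw [le_div_iff₀ hu]; linarith [hp.1]
    have hp2 : t * a t / A t ≤ 1 + a₁ := by
      rw [div_le_iff₀ hu]; linarith [hp.2]
    constructor
    · nlinarith [hr.1]
    · nlinarith [hr.2]
end

section
/- Let n ≥ 2 and p > 1, and for (ξ, ζ) ∈ ℝ^{2n} with (ξ, ζ) ≠ (0, 0) define F_p(ξ, ζ) = ∫₀¹ |tξ + (1−t)ζ|^{p−2} dt. Then there exist positive constants c(p, n) < C(p, n), depending only on p and n, such that for all (ξ, ζ) ∈ ℝ^{2n} \ {0}: c(p, n)·(|ξ|² + |ζ|²)^{(p−2)/2} ≤ F_p(ξ, ζ) ≤ C(p, n)·(|ξ|² + |ζ|²)^{(p−2)/2}. -/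
open Real MeasureTheory intervalIntegral

variable {E : Type*} [NormedAddCommGroup E] [NormedSpace ℝ E]

lemma aux_sqrtS_pos {a b : ℝ} (ha : 0 ≤ a) (hb : 0 ≤ b) (h : a ≠ 0 ∨ b ≠ 0) :
    0 < a ^ 2 + b ^ 2 := by
  rcases h with h | h
  · have : 0 < a := lt_of_le_of_ne ha (Ne.symm h)
    nlinarith
  · have : 0 < b := lt_of_le_of_ne hb (Ne.symm h)
    nlinarith

lemma aux_upper (ξ ζ : E) {t : ℝ} (ht0 : 0 ≤ t) (ht1 : t ≤ 1) :
    ‖t • ξ + (1 - t) • ζ‖ ≤ Real.sqrt (‖ξ‖ ^ 2 + ‖ζ‖ ^ 2) := by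
  have h1 : ‖t • ξ + (1 - t) • ζ‖ ≤ t * ‖ξ‖ + (1 - t) * ‖ζ‖ := by
    calc ‖t • ξ + (1 - t) • ζ‖ ≤ ‖t • ξ‖ + ‖(1 - t) • ζ‖ := norm_add_le _ _
    _ = t * ‖ξ‖ + (1 - t) * ‖ζ‖ := by
        rw [norm_smul, norm_smul, Real.norm_of_nonneg ht0,
          Real.norm_of_nonneg (by linarith : (0:ℝ) ≤ 1 - t)]
  have ha : ‖ξ‖ ≤ Real.sqrt (‖ξ‖ ^ 2 + ‖ζ‖ ^ 2) := by
    have := Real.sqrt_le_sqrt (le_add_of_nonneg_right (sq_nonneg ‖ζ‖) : ‖ξ‖ ^ 2 ≤ ‖ξ‖ ^ 2 + ‖ζ‖ ^ 2)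
    rwa [Real.sqrt_sq (norm_nonneg _)] at this
  have hb : ‖ζ‖ ≤ Real.sqrt (‖ξ‖ ^ 2 + ‖ζ‖ ^ 2) := by
    have := Real.sqrt_le_sqrt (le_add_of_nonneg_left (sq_nonneg ‖ξ‖) : ‖ζ‖ ^ 2 ≤ ‖ξ‖ ^ 2 + ‖ζ‖ ^ 2)
    rwa [Real.sqrt_sq (norm_nonneg _)] at this
  nlinarith

lemma aux_lower (ξ ζ : E) {t : ℝ} (ht0 : 0 ≤ t) (ht1 : t ≤ 1) :
    |t * ‖ξ‖ - (1 - t) * ‖ζ‖| ≤ ‖t • ξ + (1 - t) • ζ‖ := by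
  have h := abs_norm_sub_norm_le (t • ξ) (-((1 - t) • ζ))
  rw [norm_neg, sub_neg_eq_add, norm_smul, norm_smul, Real.norm_eq_abs, Real.norm_eq_abs,
    abs_of_nonneg ht0, abs_of_nonneg (by linarith : (0:ℝ) ≤ 1 - t)] at h
  exact h

lemma aux_ae (ξ ζ : E) (h : ¬(ξ = 0 ∧ ζ = 0)) :
    ∀ᵐ t : ℝ, t • ξ + (1 - t) • ζ ≠ 0 := by
  have hsub : {t : ℝ | t • ξ + (1 - t) • ζ = 0}.Subsingleton := by
    intro s hs t ht
    simp only [Set.mem_setOf_eq] at hs ht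
    by_cases hxz : ξ = ζ
    · exfalso
      subst hxz
      have heq : s • ξ + (1 - s) • ξ = ξ := by rw [← add_smul]; simp
      rw [heq] at hs
      exact h ⟨hs, hs⟩
    · have hd : (s - t) • (ξ - ζ) = 0 := by
        have : (s - t) • (ξ - ζ) = (s • ξ + (1 - s) • ζ) - (t • ξ + (1 - t) • ζ) := by
          module
        rw [this, hs, ht, sub_zero]
      rcases smul_eq_zero.mp hd with h1 | h1
      · exact sub_eq_zero.mp h1
      · exact absurd (sub_eq_zero.mp h1) hxz
  have h0 : (volume : Measure ℝ) {t : ℝ | t • ξ + (1 - t) • ζ = 0} = 0 :=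
    hsub.measure_zero volume
  refine (measure_eq_zero_iff_ae_notMem.mp h0).mono ?_
  intro t ht
  simpa using ht

lemma aux_key (ξ ζ : E) {t : ℝ} (h0 : 0 ≤ t) (h1 : t ≤ 1) (hab : 0 < ‖ξ‖ + ‖ζ‖) :
    (‖ξ‖ + ‖ζ‖) * |t - ‖ζ‖ / (‖ξ‖ + ‖ζ‖)| ≤ ‖t • ξ + (1 - t) • ζ‖ := by
  have hl := aux_lower ξ ζ h0 h1
  have heq : (‖ξ‖ + ‖ζ‖) * |t - ‖ζ‖ / (‖ξ‖ + ‖ζ‖)| = |t * ‖ξ‖ - (1 - t) * ‖ζ‖| := by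
    have h2 : (‖ξ‖ + ‖ζ‖) * (t - ‖ζ‖ / (‖ξ‖ + ‖ζ‖)) = t * ‖ξ‖ - (1 - t) * ‖ζ‖ := by
      field_simp
      ring
    calc (‖ξ‖ + ‖ζ‖) * |t - ‖ζ‖ / (‖ξ‖ + ‖ζ‖)|
        = |‖ξ‖ + ‖ζ‖| * |t - ‖ζ‖ / (‖ξ‖ + ‖ζ‖)| := by rw [abs_of_pos hab]
      _ = |(‖ξ‖ + ‖ζ‖) * (t - ‖ζ‖ / (‖ξ‖ + ‖ζ‖))| := (abs_mul _ _).symm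
      _ = |t * ‖ξ‖ - (1 - t) * ‖ζ‖| := by rw [h2]
  rw [heq]
  exact hl

lemma aux_intble (ξ ζ : E) (h : ¬(ξ = 0 ∧ ζ = 0)) {q : ℝ} (hq : -1 < q) :
    IntervalIntegrable (fun t => ‖t • ξ + (1 - t) • ζ‖ ^ q) volume 0 1 := by
  have hcont : Continuous fun t : ℝ => ‖t • ξ + (1 - t) • ζ‖ := by fun_prop
  have hmeas : ∀ a b : ℝ, AEStronglyMeasurable (fun t => ‖t • ξ + (1 - t) • ζ‖ ^ q)
      (volume.restrict (Set.uIoc a b)) := by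
    intro a b
    have m : Measurable fun t : ℝ => Real.exp (Real.log ‖t • ξ + (1 - t) • ζ‖ * q) :=
      Real.measurable_exp.comp ((Real.measurable_log.comp hcont.measurable).mul measurable_const)
    refine (m.aestronglyMeasurable.restrict).congr ?_
    refine ae_restrict_of_ae ((aux_ae ξ ζ h).mono fun t ht => ?_)
    have hpos : 0 < ‖t • ξ + (1 - t) • ζ‖ := lt_of_le_of_ne (norm_nonneg _) (Ne.symm (by simpa using ht))
    exact (Real.rpow_def_of_pos hpos q).symm
  rcases le_or_gt 0 q with hq0 | hq0
  · apply IntervalIntegrable.mono_fun'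
      (g := fun _ : ℝ => Real.sqrt (‖ξ‖ ^ 2 + ‖ζ‖ ^ 2) ^ q)
      (intervalIntegrable_const) (hmeas 0 1)
    refine Filter.Eventually.mono (self_mem_ae_restrict measurableSet_uIoc) ?_
    intro t ht
    replace ht : t ∈ Set.Ioc (0:ℝ) 1 := by
      have h' := ht
      rw [inf_eq_left.mpr (zero_le_one : (0:ℝ) ≤ 1), sup_eq_right.mpr (zero_le_one : (0:ℝ) ≤ 1)] at h'
      exact h'
    simp only [Real.norm_eq_abs]
    rw [abs_of_nonneg (Real.rpow_nonneg (norm_nonneg _) q)]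
    exact Real.rpow_le_rpow (norm_nonneg _) (aux_upper ξ ζ ht.1.le ht.2) hq0
  · have hab : 0 < ‖ξ‖ + ‖ζ‖ := by
      rcases not_and_or.mp h with h' | h'
      · have := norm_pos_iff.mpr h'; linarith [norm_nonneg ζ]
      · have := norm_pos_iff.mpr h'; linarith [norm_nonneg ξ]
    set a := ‖ξ‖ with ha
    set b := ‖ζ‖ with hb
    set t₀ := b / (a + b) with ht₀
    have ht₀0 : 0 ≤ t₀ := div_nonneg (norm_nonneg _) hab.le
    have ht₀1 : t₀ ≤ 1 := by
      rw [div_le_one hab]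
      linarith [norm_nonneg ξ]
    have hne : ∀ᵐ t : ℝ, t ≠ t₀ := by
      refine (measure_eq_zero_iff_ae_notMem.mp (measure_singleton t₀)).mono ?_
      intro t ht
      simpa using ht
    apply IntervalIntegrable.trans (b := t₀)
    · refine IntervalIntegrable.mono_fun'
        (g := fun t => (a + b) ^ q * (t₀ - t) ^ q) ?_ (hmeas 0 t₀) ?_
      · have h1 := ((intervalIntegrable_rpow' hq (a := t₀) (b := 0)).comp_sub_left
          t₀).const_mul ((a + b) ^ q)
        simpa using h1
      · filter_upwards [self_mem_ae_restrict measurableSet_uIoc, ae_restrict_of_ae hne]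
          with t ht htne
        replace ht : t ∈ Set.Ioc 0 t₀ := by
          have h' := ht
          rw [Set.uIoc_of_le ht₀0] at h'
          exact h'
        have hlt : t < t₀ := lt_of_le_of_ne ht.2 htne
        have hg := aux_key ξ ζ ht.1.le (le_trans ht.2 ht₀1) hab
        rw [abs_of_neg (by linarith : t - t₀ < 0), neg_sub] at hg
        have hpos : 0 < (a + b) * (t₀ - t) := mul_pos hab (by linarith)
        simp only [Real.norm_eq_abs]
        rw [abs_of_nonneg (Real.rpow_nonneg (norm_nonneg _) q)]
        calc ‖t • ξ + (1 - t) • ζ‖ ^ q ≤ ((a + b) * (t₀ - t)) ^ q :=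
              Real.rpow_le_rpow_of_nonpos hpos hg hq0.le
        _ = (a + b) ^ q * (t₀ - t) ^ q := Real.mul_rpow hab.le (by linarith)
    · refine IntervalIntegrable.mono_fun'
        (g := fun t => (a + b) ^ q * (t - t₀) ^ q) ?_ (hmeas t₀ 1) ?_
      · have h1 := ((intervalIntegrable_rpow' hq (a := 0) (b := 1 - t₀)).comp_sub_right
          t₀).const_mul ((a + b) ^ q)
        simpa using h1
      · filter_upwards [self_mem_ae_restrict measurableSet_uIoc] with t ht
        replace ht : t ∈ Set.Ioc t₀ 1 := by
          have h' := ht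
          rw [Set.uIoc_of_le ht₀1] at h'
          exact h'
        have hg := aux_key ξ ζ (le_trans ht₀0 ht.1.le) ht.2 hab
        rw [abs_of_pos (by linarith [ht.1] : (0:ℝ) < t - t₀)] at hg
        have hpos : 0 < (a + b) * (t - t₀) := mul_pos hab (by linarith [ht.1])
        simp only [Real.norm_eq_abs]
        rw [abs_of_nonneg (Real.rpow_nonneg (norm_nonneg _) q)]
        calc ‖t • ξ + (1 - t) • ζ‖ ^ q ≤ ((a + b) * (t - t₀)) ^ q :=
              Real.rpow_le_rpow_of_nonpos hpos hg hq0.le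
        _ = (a + b) ^ q * (t - t₀) ^ q := Real.mul_rpow hab.le (by linarith [ht.1])

lemma aux_sub {c d : ℝ} (h1 : 0 ≤ c) (h2 : c ≤ d) (h3 : d ≤ 1) :
    Set.uIcc c d ⊆ Set.uIcc (0:ℝ) 1 := by
  rw [Set.uIcc_of_le h2, Set.uIcc_of_le (by norm_num : (0:ℝ) ≤ 1)]
  exact Set.Icc_subset_Icc h1 h3

set_option maxHeartbeats 1000000 in
/-- Lemma 2.6: for `n ≥ 2` and `p > 1` there are constants `0 < c(p,n) < C(p,n)` such that
for all `(ξ, ζ) ≠ (0,0)` in `ℝ^{2n}`,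
`c·(|ξ|²+|ζ|²)^{(p-2)/2} ≤ ∫₀¹ |tξ+(1-t)ζ|^{p-2} dt ≤ C·(|ξ|²+|ζ|²)^{(p-2)/2}`. -/
theorem stmt_7 (n : ℕ) (hn : 2 ≤ n) (p : ℝ) (hp : 1 < p) :
    ∃ c C : ℝ, 0 < c ∧ c < C ∧
      ∀ ξ ζ : EuclideanSpace ℝ (Fin n), (ξ, ζ) ≠ 0 →
        c * (‖ξ‖ ^ 2 + ‖ζ‖ ^ 2) ^ ((p - 2) / 2) ≤
            (∫ t in (0:ℝ)..1, ‖t • ξ + (1 - t) • ζ‖ ^ (p - 2)) ∧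
        (∫ t in (0:ℝ)..1, ‖t • ξ + (1 - t) • ζ‖ ^ (p - 2)) ≤
            C * (‖ξ‖ ^ 2 + ‖ζ‖ ^ 2) ^ ((p - 2) / 2) := by
  have hq1 : (-1:ℝ) < p - 2 := by linarith
  rcases le_or_gt 2 p with h2 | h2
  · -- case p ≥ 2
    have hq0 : (0:ℝ) ≤ p - 2 := by linarith
    have hx14 : (0:ℝ) < (1/4 : ℝ) ^ (p - 2) := Real.rpow_pos_of_pos (by norm_num) _
    have hx14' : ((1:ℝ)/4) ^ (p - 2) ≤ 1 := Real.rpow_le_one (by norm_num) (by norm_num) hq0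
    refine ⟨(1/4) * (1/4 : ℝ) ^ (p - 2), 1, by positivity, by nlinarith, ?_⟩
    intro ξ ζ hne
    have hne' : ¬(ξ = 0 ∧ ζ = 0) := fun hc => hne (Prod.mk_eq_zero.mpr hc)
    have hor : ‖ξ‖ ≠ 0 ∨ ‖ζ‖ ≠ 0 := by
      rcases not_and_or.mp hne' with h' | h'
      · exact Or.inl (norm_ne_zero_iff.mpr h')
      · exact Or.inr (norm_ne_zero_iff.mpr h')
    have hS : 0 < ‖ξ‖ ^ 2 + ‖ζ‖ ^ 2 := aux_sqrtS_pos (norm_nonneg _) (norm_nonneg _) hor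
    have hsqpos : 0 < Real.sqrt (‖ξ‖ ^ 2 + ‖ζ‖ ^ 2) := Real.sqrt_pos.mpr hS
    have hsq : Real.sqrt (‖ξ‖ ^ 2 + ‖ζ‖ ^ 2) ^ (p - 2)
        = (‖ξ‖ ^ 2 + ‖ζ‖ ^ 2) ^ ((p - 2) / 2) := by
      rw [Real.sqrt_eq_rpow, ← Real.rpow_mul hS.le]
      congr 1
      ring
    have hint := aux_intble ξ ζ hne' hq1
    constructor
    · -- lower bound
      rcases le_total ‖ζ‖ ‖ξ‖ with hba | hba
      · -- ‖ζ‖ ≤ ‖ξ‖ : use [3/4, 1]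
        have h2a : Real.sqrt (‖ξ‖ ^ 2 + ‖ζ‖ ^ 2) ≤ 2 * ‖ξ‖ := by
          have := Real.sqrt_le_sqrt (show ‖ξ‖ ^ 2 + ‖ζ‖ ^ 2 ≤ (2 * ‖ξ‖) ^ 2 by nlinarith [norm_nonneg ζ, hba])
          rwa [Real.sqrt_sq (by positivity)] at this
        have I1 := hint.mono_set (aux_sub (le_refl 0) (by norm_num) (by norm_num)
          (c := 0) (d := 3/4))
        have I2 := hint.mono_set (aux_sub (by norm_num) (by norm_num) (le_refl 1)
          (c := 3/4) (d := 1))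
        have hsplit := intervalIntegral.integral_add_adjacent_intervals I1 I2
        have hnn : 0 ≤ ∫ t in (0:ℝ)..(3/4), ‖t • ξ + (1 - t) • ζ‖ ^ (p - 2) :=
          intervalIntegral.integral_nonneg (by norm_num)
            (fun t _ => Real.rpow_nonneg (norm_nonneg _) _)
        have hmono : (∫ t in (3/4:ℝ)..1, (Real.sqrt (‖ξ‖ ^ 2 + ‖ζ‖ ^ 2) / 4) ^ (p - 2))
            ≤ ∫ t in (3/4:ℝ)..1, ‖t • ξ + (1 - t) • ζ‖ ^ (p - 2) := by
          refine intervalIntegral.integral_mono_on (by norm_num) intervalIntegrable_const I2 ?_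
          intro t ht
          refine Real.rpow_le_rpow (by positivity) ?_ hq0
          have hl := aux_lower ξ ζ (le_trans (by norm_num) ht.1) ht.2
          have hla := le_abs_self (t * ‖ξ‖ - (1 - t) * ‖ζ‖)
          have h3 : (3/4 : ℝ) * ‖ξ‖ ≤ t * ‖ξ‖ :=
            mul_le_mul_of_nonneg_right ht.1 (norm_nonneg _)
          have h4 : (1 - t) * ‖ζ‖ ≤ (1/4) * ‖ζ‖ :=
            mul_le_mul_of_nonneg_right (by linarith [ht.1]) (norm_nonneg _)
          linarith
        have hconst : (∫ t in (3/4:ℝ)..1, (Real.sqrt (‖ξ‖ ^ 2 + ‖ζ‖ ^ 2) / 4) ^ (p - 2))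
            = (1/4) * (Real.sqrt (‖ξ‖ ^ 2 + ‖ζ‖ ^ 2) / 4) ^ (p - 2) := by
          rw [intervalIntegral.integral_const, smul_eq_mul]
          norm_num
        have hfac : (Real.sqrt (‖ξ‖ ^ 2 + ‖ζ‖ ^ 2) / 4) ^ (p - 2)
            = (‖ξ‖ ^ 2 + ‖ζ‖ ^ 2) ^ ((p - 2) / 2) * (1/4 : ℝ) ^ (p - 2) := by
          rw [show Real.sqrt (‖ξ‖ ^ 2 + ‖ζ‖ ^ 2) / 4
              = Real.sqrt (‖ξ‖ ^ 2 + ‖ζ‖ ^ 2) * (1/4) by ring,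
            Real.mul_rpow (Real.sqrt_nonneg _) (by norm_num), hsq]
        nlinarith [hmono, hconst, hfac, hsplit]
      · -- ‖ξ‖ ≤ ‖ζ‖ : use [0, 1/4]
        have h2a : Real.sqrt (‖ξ‖ ^ 2 + ‖ζ‖ ^ 2) ≤ 2 * ‖ζ‖ := by
          have := Real.sqrt_le_sqrt (show ‖ξ‖ ^ 2 + ‖ζ‖ ^ 2 ≤ (2 * ‖ζ‖) ^ 2 by nlinarith [norm_nonneg ξ, hba])
          rwa [Real.sqrt_sq (by positivity)] at this
        have I1 := hint.mono_set (aux_sub (le_refl 0) (by norm_num) (by norm_num)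
          (c := 0) (d := 1/4))
        have I2 := hint.mono_set (aux_sub (by norm_num) (by norm_num) (le_refl 1)
          (c := 1/4) (d := 1))
        have hsplit := intervalIntegral.integral_add_adjacent_intervals I1 I2
        have hnn : 0 ≤ ∫ t in (1/4:ℝ)..1, ‖t • ξ + (1 - t) • ζ‖ ^ (p - 2) :=
          intervalIntegral.integral_nonneg (by norm_num)
            (fun t _ => Real.rpow_nonneg (norm_nonneg _) _)
        have hmono : (∫ t in (0:ℝ)..(1/4), (Real.sqrt (‖ξ‖ ^ 2 + ‖ζ‖ ^ 2) / 4) ^ (p - 2))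
            ≤ ∫ t in (0:ℝ)..(1/4), ‖t • ξ + (1 - t) • ζ‖ ^ (p - 2) := by
          refine intervalIntegral.integral_mono_on (by norm_num) intervalIntegrable_const I1 ?_
          intro t ht
          refine Real.rpow_le_rpow (by positivity) ?_ hq0
          have hl := aux_lower ξ ζ ht.1 (le_trans ht.2 (by norm_num))
          have hla := neg_le_abs (t * ‖ξ‖ - (1 - t) * ‖ζ‖)
          have h3 : (3/4 : ℝ) * ‖ζ‖ ≤ (1 - t) * ‖ζ‖ :=
            mul_le_mul_of_nonneg_right (by linarith [ht.2]) (norm_nonneg _)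
          have h4 : t * ‖ξ‖ ≤ (1/4) * ‖ξ‖ :=
            mul_le_mul_of_nonneg_right ht.2 (norm_nonneg _)
          linarith
        have hconst : (∫ t in (0:ℝ)..(1/4), (Real.sqrt (‖ξ‖ ^ 2 + ‖ζ‖ ^ 2) / 4) ^ (p - 2))
            = (1/4) * (Real.sqrt (‖ξ‖ ^ 2 + ‖ζ‖ ^ 2) / 4) ^ (p - 2) := by
          rw [intervalIntegral.integral_const, smul_eq_mul]
          norm_num
        have hfac : (Real.sqrt (‖ξ‖ ^ 2 + ‖ζ‖ ^ 2) / 4) ^ (p - 2)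
            = (‖ξ‖ ^ 2 + ‖ζ‖ ^ 2) ^ ((p - 2) / 2) * (1/4 : ℝ) ^ (p - 2) := by
          rw [show Real.sqrt (‖ξ‖ ^ 2 + ‖ζ‖ ^ 2) / 4
              = Real.sqrt (‖ξ‖ ^ 2 + ‖ζ‖ ^ 2) * (1/4) by ring,
            Real.mul_rpow (Real.sqrt_nonneg _) (by norm_num), hsq]
        nlinarith [hmono, hconst, hfac, hsplit]
    · -- upper bound
      rw [one_mul, ← hsq]
      calc (∫ t in (0:ℝ)..1, ‖t • ξ + (1 - t) • ζ‖ ^ (p - 2))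
          ≤ ∫ _t in (0:ℝ)..1, Real.sqrt (‖ξ‖ ^ 2 + ‖ζ‖ ^ 2) ^ (p - 2) := by
            refine intervalIntegral.integral_mono_on (by norm_num) hint
              intervalIntegrable_const ?_
            intro t ht
            exact Real.rpow_le_rpow (norm_nonneg _) (aux_upper ξ ζ ht.1 ht.2) hq0
      _ = Real.sqrt (‖ξ‖ ^ 2 + ‖ζ‖ ^ 2) ^ (p - 2) := by
            rw [intervalIntegral.integral_const, smul_eq_mul]
            norm_num
  · -- case 1 < p < 2
    have hq0 : p - 2 < 0 := by linarith
    have hp1 : (0:ℝ) < p - 1 := by linarith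
    refine ⟨1/2, 2/(p-1), by norm_num, ?_, ?_⟩
    · rw [lt_div_iff₀ hp1]
      nlinarith
    intro ξ ζ hne
    have hne' : ¬(ξ = 0 ∧ ζ = 0) := fun hc => hne (Prod.mk_eq_zero.mpr hc)
    have hor : ‖ξ‖ ≠ 0 ∨ ‖ζ‖ ≠ 0 := by
      rcases not_and_or.mp hne' with h' | h'
      · exact Or.inl (norm_ne_zero_iff.mpr h')
      · exact Or.inr (norm_ne_zero_iff.mpr h')
    have hS : 0 < ‖ξ‖ ^ 2 + ‖ζ‖ ^ 2 := aux_sqrtS_pos (norm_nonneg _) (norm_nonneg _) hor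
    have hsqpos : 0 < Real.sqrt (‖ξ‖ ^ 2 + ‖ζ‖ ^ 2) := Real.sqrt_pos.mpr hS
    have hsq : Real.sqrt (‖ξ‖ ^ 2 + ‖ζ‖ ^ 2) ^ (p - 2)
        = (‖ξ‖ ^ 2 + ‖ζ‖ ^ 2) ^ ((p - 2) / 2) := by
      rw [Real.sqrt_eq_rpow, ← Real.rpow_mul hS.le]
      congr 1
      ring
    have hint := aux_intble ξ ζ hne' hq1
    have hab : 0 < ‖ξ‖ + ‖ζ‖ := by
      rcases hor with h' | h'
      · have := lt_of_le_of_ne (norm_nonneg ξ) (Ne.symm h')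
        linarith [norm_nonneg ζ]
      · have := lt_of_le_of_ne (norm_nonneg ζ) (Ne.symm h')
        linarith [norm_nonneg ξ]
    constructor
    · -- lower bound
      have hmono := intervalIntegral.integral_mono_ae_restrict
        (by norm_num : (0:ℝ) ≤ 1)
        (_root_.intervalIntegrable_const (c := (‖ξ‖ ^ 2 + ‖ζ‖ ^ 2) ^ ((p - 2) / 2))) hint ?_
      · rw [intervalIntegral.integral_const, smul_eq_mul] at hmono
        have hnn : 0 ≤ (‖ξ‖ ^ 2 + ‖ζ‖ ^ 2) ^ ((p - 2) / 2) := Real.rpow_nonneg hS.le _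
        linarith [hmono]
      · filter_upwards [ae_restrict_of_ae (aux_ae ξ ζ hne'),
          self_mem_ae_restrict measurableSet_Icc] with t h1 ht
        have hpos : 0 < ‖t • ξ + (1 - t) • ζ‖ := norm_pos_iff.mpr h1
        show (‖ξ‖ ^ 2 + ‖ζ‖ ^ 2) ^ ((p - 2) / 2) ≤ ‖t • ξ + (1 - t) • ζ‖ ^ (p - 2)
        rw [← hsq]
        exact Real.rpow_le_rpow_of_nonpos hpos (aux_upper ξ ζ ht.1 ht.2) hq0.le
    · -- upper bound
      set t₀ := ‖ζ‖ / (‖ξ‖ + ‖ζ‖) with ht₀def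
      have ht₀0 : 0 ≤ t₀ := div_nonneg (norm_nonneg _) hab.le
      have ht₀1 : t₀ ≤ 1 := by
        rw [ht₀def, div_le_one hab]
        linarith [norm_nonneg ξ]
      have I1 := hint.mono_set (aux_sub (le_refl 0) ht₀0 ht₀1)
      have I2 := hint.mono_set (aux_sub ht₀0 ht₀1 (le_refl 1))
      have hsplit := intervalIntegral.integral_add_adjacent_intervals I1 I2
      have J1 : IntervalIntegrable
          (fun t => (‖ξ‖ + ‖ζ‖) ^ (p - 2) * (t₀ - t) ^ (p - 2)) volume 0 t₀ := by
        have h1 := ((intervalIntegrable_rpow' hq1 (a := t₀) (b := 0)).comp_sub_left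
          t₀).const_mul ((‖ξ‖ + ‖ζ‖) ^ (p - 2))
        simpa using h1
      have J2 : IntervalIntegrable
          (fun t => (‖ξ‖ + ‖ζ‖) ^ (p - 2) * (t - t₀) ^ (p - 2)) volume t₀ 1 := by
        have h1 := ((intervalIntegrable_rpow' hq1 (a := 0) (b := 1 - t₀)).comp_sub_right
          t₀).const_mul ((‖ξ‖ + ‖ζ‖) ^ (p - 2))
        simpa using h1
      have hne_t₀ : ∀ᵐ t : ℝ, t ≠ t₀ := by
        refine (measure_eq_zero_iff_ae_notMem.mp (measure_singleton t₀)).mono ?_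
        intro t ht
        simpa using ht
      have hb1 : (∫ t in (0:ℝ)..t₀, ‖t • ξ + (1 - t) • ζ‖ ^ (p - 2))
          ≤ ∫ t in (0:ℝ)..t₀, (‖ξ‖ + ‖ζ‖) ^ (p - 2) * (t₀ - t) ^ (p - 2) := by
        refine intervalIntegral.integral_mono_ae_restrict ht₀0 I1 J1 ?_
        filter_upwards [ae_restrict_of_ae hne_t₀, self_mem_ae_restrict measurableSet_Icc]
          with t htne ht
        have hlt : t < t₀ := lt_of_le_of_ne ht.2 htne
        have hg := aux_key ξ ζ ht.1 (le_trans ht.2 ht₀1) hab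
        rw [abs_of_neg (by linarith : t - t₀ < 0), neg_sub] at hg
        have hpos : 0 < (‖ξ‖ + ‖ζ‖) * (t₀ - t) := mul_pos hab (by linarith)
        show ‖t • ξ + (1 - t) • ζ‖ ^ (p - 2)
            ≤ (‖ξ‖ + ‖ζ‖) ^ (p - 2) * (t₀ - t) ^ (p - 2)
        calc ‖t • ξ + (1 - t) • ζ‖ ^ (p - 2) ≤ ((‖ξ‖ + ‖ζ‖) * (t₀ - t)) ^ (p - 2) :=
              Real.rpow_le_rpow_of_nonpos hpos hg hq0.le
        _ = (‖ξ‖ + ‖ζ‖) ^ (p - 2) * (t₀ - t) ^ (p - 2) :=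
              Real.mul_rpow hab.le (by linarith)
      have hb2 : (∫ t in t₀..(1:ℝ), ‖t • ξ + (1 - t) • ζ‖ ^ (p - 2))
          ≤ ∫ t in t₀..(1:ℝ), (‖ξ‖ + ‖ζ‖) ^ (p - 2) * (t - t₀) ^ (p - 2) := by
        refine intervalIntegral.integral_mono_ae_restrict ht₀1 I2 J2 ?_
        filter_upwards [ae_restrict_of_ae hne_t₀, self_mem_ae_restrict measurableSet_Icc]
          with t htne ht
        have hlt : t₀ < t := lt_of_le_of_ne ht.1 (Ne.symm htne)
        have hg := aux_key ξ ζ (le_trans ht₀0 ht.1) ht.2 hab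
        rw [abs_of_pos (by linarith : (0:ℝ) < t - t₀)] at hg
        have hpos : 0 < (‖ξ‖ + ‖ζ‖) * (t - t₀) := mul_pos hab (by linarith)
        show ‖t • ξ + (1 - t) • ζ‖ ^ (p - 2)
            ≤ (‖ξ‖ + ‖ζ‖) ^ (p - 2) * (t - t₀) ^ (p - 2)
        calc ‖t • ξ + (1 - t) • ζ‖ ^ (p - 2) ≤ ((‖ξ‖ + ‖ζ‖) * (t - t₀)) ^ (p - 2) :=
              Real.rpow_le_rpow_of_nonpos hpos hg hq0.le
        _ = (‖ξ‖ + ‖ζ‖) ^ (p - 2) * (t - t₀) ^ (p - 2) :=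
              Real.mul_rpow hab.le (by linarith)
      have K1 : (∫ t in (0:ℝ)..t₀, (‖ξ‖ + ‖ζ‖) ^ (p - 2) * (t₀ - t) ^ (p - 2))
          = (‖ξ‖ + ‖ζ‖) ^ (p - 2) * (t₀ ^ (p - 1) / (p - 1)) := by
        rw [intervalIntegral.integral_const_mul]
        congr 1
        have hc := intervalIntegral.integral_comp_sub_left
          (a := 0) (b := t₀) (fun s : ℝ => s ^ (p - 2)) t₀
        simp only [sub_self, sub_zero] at hc
        rw [hc, integral_rpow (Or.inl hq1),
          Real.zero_rpow (by linarith : p - 2 + 1 ≠ 0),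
          show p - 2 + 1 = p - 1 by ring]
        ring
      have K2 : (∫ t in t₀..(1:ℝ), (‖ξ‖ + ‖ζ‖) ^ (p - 2) * (t - t₀) ^ (p - 2))
          = (‖ξ‖ + ‖ζ‖) ^ (p - 2) * ((1 - t₀) ^ (p - 1) / (p - 1)) := by
        rw [intervalIntegral.integral_const_mul]
        congr 1
        have hc := intervalIntegral.integral_comp_sub_right
          (a := t₀) (b := 1) (fun s : ℝ => s ^ (p - 2)) t₀
        simp only [sub_self] at hc
        rw [hc, integral_rpow (Or.inl hq1),
          Real.zero_rpow (by linarith : p - 2 + 1 ≠ 0),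
          show p - 2 + 1 = p - 1 by ring]
        ring
      have hK1 : t₀ ^ (p - 1) ≤ 1 := Real.rpow_le_one ht₀0 ht₀1 (by linarith)
      have hK2 : (1 - t₀) ^ (p - 1) ≤ 1 :=
        Real.rpow_le_one (by linarith) (by linarith) (by linarith)
      have hab_sqrt : Real.sqrt (‖ξ‖ ^ 2 + ‖ζ‖ ^ 2) ≤ ‖ξ‖ + ‖ζ‖ := by
        have := Real.sqrt_le_sqrt (show ‖ξ‖ ^ 2 + ‖ζ‖ ^ 2 ≤ (‖ξ‖ + ‖ζ‖) ^ 2 by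
          nlinarith [mul_nonneg (norm_nonneg ξ) (norm_nonneg ζ)])
        rwa [Real.sqrt_sq hab.le] at this
      have habS : (‖ξ‖ + ‖ζ‖) ^ (p - 2) ≤ (‖ξ‖ ^ 2 + ‖ζ‖ ^ 2) ^ ((p - 2) / 2) := by
        rw [← hsq]
        exact Real.rpow_le_rpow_of_nonpos hsqpos hab_sqrt hq0.le
      have hposab : 0 < (‖ξ‖ + ‖ζ‖) ^ (p - 2) := Real.rpow_pos_of_pos hab _
      have e1 : (‖ξ‖ + ‖ζ‖) ^ (p - 2) * t₀ ^ (p - 1)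
          ≤ (‖ξ‖ ^ 2 + ‖ζ‖ ^ 2) ^ ((p - 2) / 2) * 1 :=
        mul_le_mul habS hK1 (Real.rpow_nonneg ht₀0 _) (Real.rpow_nonneg hS.le _)
      have e2 : (‖ξ‖ + ‖ζ‖) ^ (p - 2) * (1 - t₀) ^ (p - 1)
          ≤ (‖ξ‖ ^ 2 + ‖ζ‖ ^ 2) ^ ((p - 2) / 2) * 1 :=
        mul_le_mul habS hK2 (Real.rpow_nonneg (by linarith) _) (Real.rpow_nonneg hS.le _)
      have hsum := add_le_add hb1 hb2
      rw [K1, K2] at hsum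
      have hfinal : (‖ξ‖ + ‖ζ‖) ^ (p - 2) * (t₀ ^ (p - 1) / (p - 1))
          + (‖ξ‖ + ‖ζ‖) ^ (p - 2) * ((1 - t₀) ^ (p - 1) / (p - 1))
          ≤ 2 / (p - 1) * (‖ξ‖ ^ 2 + ‖ζ‖ ^ 2) ^ ((p - 2) / 2) := by
        rw [show (‖ξ‖ + ‖ζ‖) ^ (p - 2) * (t₀ ^ (p - 1) / (p - 1))
            + (‖ξ‖ + ‖ζ‖) ^ (p - 2) * ((1 - t₀) ^ (p - 1) / (p - 1))
            = ((‖ξ‖ + ‖ζ‖) ^ (p - 2) * t₀ ^ (p - 1)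
              + (‖ξ‖ + ‖ζ‖) ^ (p - 2) * (1 - t₀) ^ (p - 1)) / (p - 1) by ring,
          show 2 / (p - 1) * (‖ξ‖ ^ 2 + ‖ζ‖ ^ 2) ^ ((p - 2) / 2)
            = 2 * (‖ξ‖ ^ 2 + ‖ζ‖ ^ 2) ^ ((p - 2) / 2) / (p - 1) by ring]
        exact (div_le_div_iff_of_pos_right hp1).mpr (by linarith)
      calc (∫ t in (0:ℝ)..1, ‖t • ξ + (1 - t) • ζ‖ ^ (p - 2))
          = (∫ t in (0:ℝ)..t₀, ‖t • ξ + (1 - t) • ζ‖ ^ (p - 2))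
            + ∫ t in t₀..(1:ℝ), ‖t • ξ + (1 - t) • ζ‖ ^ (p - 2) := hsplit.symm
      _ ≤ 2 / (p - 1) * (‖ξ‖ ^ 2 + ‖ζ‖ ^ 2) ^ ((p - 2) / 2) := le_trans hsum hfinal
end

section
/- Let n ≥ 2 and for (ξ, ζ) ∈ ℝ^{2n} with (ξ, ζ) ≠ (0, 0) define G(ξ, ζ) = ∫₀¹ a(|θ_t|)/|θ_t| dt, where θ_t = tξ + (1−t)ζ. Then there exist two positive constants c (depending only on n and a₁) and C (depending only on n and a₀) such that for all (ξ, ζ) ∈ ℝ^{2n} \ {0}: c·a(|ξ| + |ζ|)/(|ξ| + |ζ|) ≤ G(ξ, ζ) ≤ C·a(|ξ| + |ζ|)/(|ξ| + |ζ|). -/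
open Real MeasureTheory

/-- If `t * a'(t) ≤ q * a(t)` on `(0,∞)`, then `a(t)/t^q` is antitone there. -/
lemma aux_antitoneOn (a : ℝ → ℝ) (q : ℝ)
    (ha_diff : ∀ t ∈ Set.Ioi (0:ℝ), DifferentiableAt ℝ a t)
    (h : ∀ t ∈ Set.Ioi (0:ℝ), t * deriv a t ≤ q * a t) :
    AntitoneOn (fun t => a t / t ^ q) (Set.Ioi (0:ℝ)) := by
  have hint : interior (Set.Ioi (0:ℝ)) = Set.Ioi 0 := isOpen_Ioi.interior_eq
  have hder : ∀ t ∈ Set.Ioi (0:ℝ), HasDerivAt (fun t => a t / t ^ q)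
      ((deriv a t * t ^ q - a t * (q * t ^ (q - 1))) / (t ^ q) ^ 2) t := fun t ht =>
    ((ha_diff t ht).hasDerivAt).div (Real.hasDerivAt_rpow_const (Or.inl (ne_of_gt ht)))
      (Real.rpow_pos_of_pos ht q).ne'
  apply antitoneOn_of_deriv_nonpos (convex_Ioi 0)
  · intro t ht
    exact ((hder t ht).continuousAt).continuousWithinAt
  · intro t ht
    rw [hint] at ht
    exact ((hder t ht).differentiableAt).differentiableWithinAt
  · intro t ht
    rw [hint] at ht
    rw [(hder t ht).deriv]
    apply div_nonpos_of_nonpos_of_nonneg _ (by positivity)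
    have ht' : (0:ℝ) < t := ht
    have hq : t ^ q = t ^ (q - 1) * t := by
      rw [← Real.rpow_add_one (ne_of_gt ht') (q - 1), sub_add_cancel]
    rw [hq]
    nlinarith [h t ht, Real.rpow_nonneg (le_of_lt ht') (q - 1)]

/-- If `q * a(t) ≤ t * a'(t)` on `(0,∞)`, then `a(t)/t^q` is monotone there. -/
lemma aux_monotoneOn (a : ℝ → ℝ) (q : ℝ)
    (ha_diff : ∀ t ∈ Set.Ioi (0:ℝ), DifferentiableAt ℝ a t)
    (h : ∀ t ∈ Set.Ioi (0:ℝ), q * a t ≤ t * deriv a t) :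
    MonotoneOn (fun t => a t / t ^ q) (Set.Ioi (0:ℝ)) := by
  have hint : interior (Set.Ioi (0:ℝ)) = Set.Ioi 0 := isOpen_Ioi.interior_eq
  have hder : ∀ t ∈ Set.Ioi (0:ℝ), HasDerivAt (fun t => a t / t ^ q)
      ((deriv a t * t ^ q - a t * (q * t ^ (q - 1))) / (t ^ q) ^ 2) t := fun t ht =>
    ((ha_diff t ht).hasDerivAt).div (Real.hasDerivAt_rpow_const (Or.inl (ne_of_gt ht)))
      (Real.rpow_pos_of_pos ht q).ne'
  apply monotoneOn_of_deriv_nonneg (convex_Ioi 0)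
  · intro t ht
    exact ((hder t ht).continuousAt).continuousWithinAt
  · intro t ht
    rw [hint] at ht
    exact ((hder t ht).differentiableAt).differentiableWithinAt
  · intro t ht
    rw [hint] at ht
    rw [(hder t ht).deriv]
    apply div_nonneg _ (by positivity)
    have ht' : (0:ℝ) < t := ht
    have hq : t ^ q = t ^ (q - 1) * t := by
      rw [← Real.rpow_add_one (ne_of_gt ht') (q - 1), sub_add_cancel]
    rw [hq]
    nlinarith [h t ht, Real.rpow_nonneg (le_of_lt ht') (q - 1)]

lemma aux_abs_rpow_II {p : ℝ} (hp : 0 < p) {b : ℝ} (hb : 0 ≤ b) :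
    IntervalIntegrable (fun u => |u| ^ (p - 1)) volume 0 b := by
  rw [intervalIntegrable_iff_integrableOn_Ioc_of_le hb]
  refine MeasureTheory.IntegrableOn.congr_fun
    ((intervalIntegral.intervalIntegrable_rpow' (by linarith : (-1:ℝ) < p - 1)
      (a := 0) (b := b)).1) ?_ measurableSet_Ioc
  intro u hu
  show u ^ (p - 1) = |u| ^ (p - 1)
  rw [abs_of_nonneg (le_of_lt hu.1)]

lemma aux_abs_rpow_val {p : ℝ} (hp : 0 < p) {b : ℝ} (hb : 0 ≤ b) :
    ∫ u in (0:ℝ)..b, |u| ^ (p - 1) = b ^ p / p := by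
  rw [intervalIntegral.integral_congr (g := fun u : ℝ => u ^ (p - 1)) ?_]
  · rw [integral_rpow (Or.inl (by linarith : (-1:ℝ) < p - 1)), sub_add_cancel,
      Real.zero_rpow hp.ne', sub_zero]
  · intro u hu
    rw [Set.uIcc_of_le hb] at hu
    simp only [abs_of_nonneg hu.1]

lemma aux_abs_rpow_II_neg {p : ℝ} (hp : 0 < p) {y : ℝ} (hy : 0 ≤ y) :
    IntervalIntegrable (fun u => |u| ^ (p - 1)) volume (-y) 0 := by
  have h := (IntervalIntegrable.iff_comp_neg (h := by simp)).mp (aux_abs_rpow_II hp hy)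
  have : (fun x : ℝ => |(-x)| ^ (p - 1)) = fun u => |u| ^ (p - 1) := by
    funext x; rw [abs_neg]
  rw [this] at h
  simpa using h.symm

lemma aux_abs_rpow_val_neg {p : ℝ} (hp : 0 < p) {y : ℝ} (hy : 0 ≤ y) :
    ∫ u in (-y)..(0:ℝ), |u| ^ (p - 1) = y ^ p / p := by
  have h := intervalIntegral.integral_comp_neg (a := (0:ℝ)) (b := y)
    (fun u : ℝ => |u| ^ (p - 1))
  simp only [abs_neg, neg_zero] at h
  rw [← h, aux_abs_rpow_val hp hy]

lemma aux_affine_II {s y p : ℝ} (hs : 0 < s) (hy : 0 ≤ y) (hys : y ≤ s) (hp : 0 < p) :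
    IntervalIntegrable (fun t => |s * t - y| ^ (p - 1)) volume 0 1 := by
  have h1 : IntervalIntegrable (fun u => |u| ^ (p - 1)) volume (-y) (s - y) :=
    (aux_abs_rpow_II_neg hp hy).trans (aux_abs_rpow_II hp (by linarith))
  have h2 := h1.comp_sub_right y
  have h3 := h2.comp_mul_left (c := s)
  simp only [neg_add_cancel, sub_add_cancel, div_self hs.ne', zero_div] at h3
  exact h3

lemma aux_affine_val {s y p : ℝ} (hs : 0 < s) (hy : 0 ≤ y) (hys : y ≤ s) (hp : 0 < p) :
    ∫ t in (0:ℝ)..1, |s * t - y| ^ (p - 1) = ((s - y) ^ p + y ^ p) / (p * s) := by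
  have h := intervalIntegral.integral_comp_mul_sub (a := (0:ℝ)) (b := 1)
    (fun u : ℝ => |u| ^ (p - 1)) hs.ne' y
  rw [h]
  have hsplit : ∫ u in (-y)..(s - y), |u| ^ (p - 1)
      = (∫ u in (-y)..(0:ℝ), |u| ^ (p - 1)) + ∫ u in (0:ℝ)..(s - y), |u| ^ (p - 1) :=
    (intervalIntegral.integral_add_adjacent_intervals
      (aux_abs_rpow_II_neg hp hy) (aux_abs_rpow_II hp (by linarith))).symm
  have e0 : s * 0 - y = -y := by ring
  have e1 : s * 1 - y = s - y := by ring
  rw [e0, e1, hsplit, aux_abs_rpow_val_neg hp hy, aux_abs_rpow_val hp (by linarith)]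
  rw [smul_eq_mul]
  field_simp
  ring

set_option maxHeartbeats 1000000 in
/-- Lemma 2.5: there are positive constants `c` (depending only on `n, a₁`) and `C`
(depending only on `n, a₀`) such that for all `(ξ, ζ) ≠ (0,0)` in `ℝ^{2n}`,
`c·a(|ξ|+|ζ|)/(|ξ|+|ζ|) ≤ ∫₀¹ a(|θ_t|)/|θ_t| dt ≤ C·a(|ξ|+|ζ|)/(|ξ|+|ζ|)`,
where `θ_t = tξ + (1-t)ζ`. -/
theorem stmt_8
    (a : ℝ → ℝ) (a₀ a₁ : ℝ)
    (ha_cont : ContinuousOn a (Set.Ici 0))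
    (ha_diff : ∀ t ∈ Set.Ioi (0:ℝ), DifferentiableAt ℝ a t)
    (ha_deriv_cont : ContinuousOn (deriv a) (Set.Ioi 0))
    (ha_zero : a 0 = 0)
    (ha_pos : ∀ t > 0, 0 < a t)
    (ha₀_pos : 0 < a₀) (ha₀_lt : a₀ < 1) (ha₁_gt : 1 < a₁)
    (hcond : ∀ t > 0, a₀ ≤ t * deriv a t / a t ∧ t * deriv a t / a t ≤ a₁)
    (n : ℕ) (hn : 2 ≤ n) :
    ∃ c C : ℝ, 0 < c ∧ 0 < C ∧
      ∀ ξ ζ : EuclideanSpace ℝ (Fin n), (ξ, ζ) ≠ 0 →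
        c * (a (‖ξ‖ + ‖ζ‖) / (‖ξ‖ + ‖ζ‖)) ≤
            (∫ t in (0:ℝ)..1, a ‖t • ξ + (1 - t) • ζ‖ / ‖t • ξ + (1 - t) • ζ‖) ∧
        (∫ t in (0:ℝ)..1, a ‖t • ξ + (1 - t) • ζ‖ / ‖t • ξ + (1 - t) • ζ‖) ≤
            C * (a (‖ξ‖ + ‖ζ‖) / (‖ξ‖ + ‖ζ‖)) := by
  have ha₁_pos : (0:ℝ) < a₁ := by linarith
  -- the two monotonicity facts
  have hA : AntitoneOn (fun t => a t / t ^ a₁) (Set.Ioi (0:ℝ)) := by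
    apply aux_antitoneOn a a₁ ha_diff
    intro t ht
    have h := (hcond t ht).2
    have hat := ha_pos t ht
    rw [div_le_iff₀ hat] at h
    linarith
  have hM : MonotoneOn (fun t => a t / t ^ a₀) (Set.Ioi (0:ℝ)) := by
    apply aux_monotoneOn a a₀ ha_diff
    intro t ht
    have h := (hcond t ht).1
    have hat := ha_pos t ht
    rw [le_div_iff₀ hat] at h
    linarith
  refine ⟨1 / (2 ^ a₁ * a₁), 2 / a₀, by positivity, by positivity, ?_⟩
  intro ξ ζ hne
  set x := ‖ξ‖ with hxdef
  set y := ‖ζ‖ with hydef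
  set s := x + y with hsdef
  have hx : 0 ≤ x := norm_nonneg _
  have hy : 0 ≤ y := norm_nonneg _
  have hs : 0 < s := by
    rcases lt_or_eq_of_le (by positivity : (0:ℝ) ≤ s) with h | h
    · exact h
    · exfalso
      apply hne
      have hx0 : x = 0 := by linarith [hy]
      have hy0 : y = 0 := by linarith [hx]
      have : ξ = 0 := norm_eq_zero.mp hx0
      have : ζ = 0 := norm_eq_zero.mp hy0
      simp [Prod.ext_iff, norm_eq_zero.mp hx0, norm_eq_zero.mp hy0]
  have has : 0 < a s := ha_pos s hs
  set r : ℝ → ℝ := fun t => ‖t • ξ + (1 - t) • ζ‖ with hrdef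
  have hr_cont : Continuous r := by
    apply Continuous.norm
    exact (continuous_id.smul continuous_const).add
      ((continuous_const.sub continuous_id).smul continuous_const)
  have hr_nonneg : ∀ t, 0 ≤ r t := fun t => norm_nonneg _
  -- pointwise norm bounds
  have key1 : ∀ t ∈ Set.Icc (0:ℝ) 1, r t ≤ s := by
    intro t ht
    have e1 : ‖t • ξ‖ = t * x := by
      rw [norm_smul, Real.norm_eq_abs, abs_of_nonneg ht.1]
    have e2 : ‖(1 - t) • ζ‖ = (1 - t) * y := by
      rw [norm_smul, Real.norm_eq_abs, abs_of_nonneg (by linarith [ht.2])]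
    calc r t ≤ ‖t • ξ‖ + ‖(1 - t) • ζ‖ := norm_add_le _ _
      _ = t * x + (1 - t) * y := by rw [e1, e2]
      _ ≤ s := by nlinarith [ht.1, ht.2]
  have key2 : ∀ t ∈ Set.Icc (0:ℝ) 1, |s * t - y| ≤ r t := by
    intro t ht
    have e1 : ‖t • ξ‖ = t * x := by
      rw [norm_smul, Real.norm_eq_abs, abs_of_nonneg ht.1]
    have e2 : ‖(1 - t) • ζ‖ = (1 - t) * y := by
      rw [norm_smul, Real.norm_eq_abs, abs_of_nonneg (by linarith [ht.2])]
    have h1 : ‖t • ξ‖ - r t ≤ ‖(1 - t) • ζ‖ := by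
      have := norm_sub_norm_le (t • ξ) (t • ξ + (1 - t) • ζ)
      rw [sub_add_cancel_left, norm_neg] at this
      linarith
    have h2 : ‖(1 - t) • ζ‖ - r t ≤ ‖t • ξ‖ := by
      have h := norm_sub_norm_le ((1 - t) • ζ) (t • ξ + (1 - t) • ζ)
      have e : (1 - t) • ζ - (t • ξ + (1 - t) • ζ) = -(t • ξ) := by abel
      rw [e, norm_neg] at h
      linarith
    rw [abs_le]
    constructor
    · rw [e1, e2] at h2; nlinarith
    · rw [e1, e2] at h1; nlinarith
  -- pointwise bounds on the integrand
  set K := a s / s ^ a₀ with hKdef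
  set k := a s / s ^ a₁ with hkdef
  have hK : 0 < K := by
    have := Real.rpow_pos_of_pos hs a₀; positivity
  have hk : 0 < k := by
    have := Real.rpow_pos_of_pos hs a₁; positivity
  set F : ℝ → ℝ := fun t => a (r t) / r t with hFdef
  set U : ℝ → ℝ := fun t => K * |s * t - y| ^ (a₀ - 1) with hUdef
  set L : ℝ → ℝ := fun t => k * |s * t - y| ^ (a₁ - 1) with hLdef
  have hF_nonneg : ∀ t, 0 ≤ F t := by
    intro t
    rcases eq_or_lt_of_le (hr_nonneg t) with h | h
    · simp [hFdef, ← h, ha_zero]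
    · exact le_of_lt (div_pos (ha_pos _ h) h)
  have hF_upper : ∀ t ∈ Set.Icc (0:ℝ) 1, t ≠ y / s → F t ≤ U t := by
    intro t ht hts
    have hu : 0 < |s * t - y| := by
      rw [abs_pos]
      intro hc
      apply hts
      field_simp
      linarith
    have hur : |s * t - y| ≤ r t := key2 t ht
    have hrt : 0 < r t := lt_of_lt_of_le hu hur
    have hmono := hM (Set.mem_Ioi.mpr hrt) (Set.mem_Ioi.mpr hs) (key1 t ht)
    have hrp := Real.rpow_pos_of_pos hrt a₀
    have hid : F t = (a (r t) / (r t) ^ a₀) * (r t) ^ (a₀ - 1) := by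
      rw [Real.rpow_sub_one hrt.ne']
      field_simp [hFdef]
      exact div_mul_cancel₀ _ hrt.ne'
    rw [hid]
    calc (a (r t) / (r t) ^ a₀) * (r t) ^ (a₀ - 1)
        ≤ K * (r t) ^ (a₀ - 1) := by
          apply mul_le_mul_of_nonneg_right hmono (Real.rpow_nonneg hrt.le _)
      _ ≤ K * |s * t - y| ^ (a₀ - 1) := by
          apply mul_le_mul_of_nonneg_left _ hK.le
          exact Real.rpow_le_rpow_of_nonpos hu hur (by linarith)
  have hF_lower : ∀ t ∈ Set.Icc (0:ℝ) 1, L t ≤ F t := by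
    intro t ht
    rcases eq_or_lt_of_le (hr_nonneg t) with h | hrt
    · have hu0 : |s * t - y| = 0 :=
        le_antisymm (by rw [h]; exact key2 t ht) (abs_nonneg _)
      simp [hLdef, hFdef, hu0, ← h, ha_zero, Real.zero_rpow (by linarith : a₁ - 1 ≠ 0)]
    · have hur : |s * t - y| ≤ r t := key2 t ht
      have hmono := hA (Set.mem_Ioi.mpr hrt) (Set.mem_Ioi.mpr hs) (key1 t ht)
      have hid : F t = (a (r t) / (r t) ^ a₁) * (r t) ^ (a₁ - 1) := by
        rw [Real.rpow_sub_one hrt.ne']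
        field_simp [hFdef]
        exact div_mul_cancel₀ _ hrt.ne'
      rw [hid]
      calc L t ≤ k * (r t) ^ (a₁ - 1) := by
            apply mul_le_mul_of_nonneg_left _ hk.le
            exact Real.rpow_le_rpow (abs_nonneg _) hur (by linarith)
        _ ≤ (a (r t) / (r t) ^ a₁) * (r t) ^ (a₁ - 1) := by
            apply mul_le_mul_of_nonneg_right hmono (Real.rpow_nonneg hrt.le _)
  -- integrability
  have hU_int : IntervalIntegrable U volume 0 1 :=
    (aux_affine_II hs hy (by linarith) ha₀_pos).const_mul K
  have hL_int : IntervalIntegrable L volume 0 1 :=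
    (aux_affine_II hs hy (by linarith) ha₁_pos).const_mul k
  have hne_ae : ∀ᵐ t ∂(volume : Measure ℝ), t ≠ y / s := by
    have h : (volume : Measure ℝ) {y / s} = 0 := measure_singleton _
    rw [MeasureTheory.measure_eq_zero_iff_ae_notMem] at h
    simpa using h
  have hF_meas : AEStronglyMeasurable F volume := by
    have h1 : Continuous fun t => a (r t) :=
      ha_cont.comp_continuous hr_cont fun t => Set.mem_Ici.mpr (hr_nonneg t)
    exact (h1.measurable.div hr_cont.measurable).aestronglyMeasurable
  have hF_int : IntervalIntegrable F volume 0 1 := by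
    rw [intervalIntegrable_iff_integrableOn_Ioc_of_le zero_le_one]
    apply MeasureTheory.Integrable.mono
      ((intervalIntegrable_iff_integrableOn_Ioc_of_le zero_le_one).mp hU_int)
      hF_meas.restrict
    filter_upwards [ae_restrict_mem measurableSet_Ioc, ae_restrict_of_ae hne_ae] with t ht hts
    rw [Real.norm_eq_abs, Real.norm_eq_abs, abs_of_nonneg (hF_nonneg t)]
    have hU_nonneg : 0 ≤ U t := by
      apply mul_nonneg hK.le (Real.rpow_nonneg (abs_nonneg _) _)
    calc F t ≤ U t := hF_upper t ⟨ht.1.le, ht.2⟩ hts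
      _ ≤ |U t| := le_abs_self _
  -- integral values
  have hU_val : ∫ t in (0:ℝ)..1, U t = K * ((x ^ a₀ + y ^ a₀) / (a₀ * s)) := by
    rw [hUdef]
    rw [intervalIntegral.integral_const_mul, aux_affine_val hs hy (by linarith) ha₀_pos]
    have : s - y = x := by rw [hsdef]; ring
    rw [this]
  have hL_val : ∫ t in (0:ℝ)..1, L t = k * ((x ^ a₁ + y ^ a₁) / (a₁ * s)) := by
    rw [hLdef]
    rw [intervalIntegral.integral_const_mul, aux_affine_val hs hy (by linarith) ha₁_pos]
    have : s - y = x := by rw [hsdef]; ring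
    rw [this]
  constructor
  · -- lower bound
    have hIle : ∫ t in (0:ℝ)..1, L t ≤ ∫ t in (0:ℝ)..1, F t :=
      intervalIntegral.integral_mono_on zero_le_one hL_int hF_int hF_lower
    refine le_trans ?_ hIle
    rw [hL_val]
    have hhalf : (s / 2) ^ a₁ ≤ x ^ a₁ + y ^ a₁ := by
      rcases le_total x y with h | h
      · have h2 : s / 2 ≤ y := by rw [hsdef]; linarith
        calc (s / 2) ^ a₁ ≤ y ^ a₁ := Real.rpow_le_rpow (by positivity) h2 ha₁_pos.le
          _ ≤ x ^ a₁ + y ^ a₁ := by nlinarith [Real.rpow_nonneg hx a₁]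
      · have h2 : s / 2 ≤ x := by rw [hsdef]; linarith
        calc (s / 2) ^ a₁ ≤ x ^ a₁ := Real.rpow_le_rpow (by positivity) h2 ha₁_pos.le
          _ ≤ x ^ a₁ + y ^ a₁ := by nlinarith [Real.rpow_nonneg hy a₁]
    have heq : k * ((s / 2) ^ a₁ / (a₁ * s)) = 1 / (2 ^ a₁ * a₁) * (a s / s) := by
      rw [hkdef, Real.div_rpow hs.le (by norm_num : (0:ℝ) ≤ 2)]
      have h1 : (0:ℝ) < s ^ a₁ := Real.rpow_pos_of_pos hs a₁
      have h2 : (0:ℝ) < (2:ℝ) ^ a₁ := Real.rpow_pos_of_pos two_pos a₁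
      generalize hP : (s:ℝ) ^ a₁ = P at h1 ⊢
      generalize hQ : (2:ℝ) ^ a₁ = Q at h2 ⊢
      field_simp [h1.ne', h2.ne']
    calc 1 / (2 ^ a₁ * a₁) * (a s / s) = k * ((s / 2) ^ a₁ / (a₁ * s)) := heq.symm
      _ ≤ k * ((x ^ a₁ + y ^ a₁) / (a₁ * s)) := by gcongr
  · -- upper bound
    have hIle : ∫ t in (0:ℝ)..1, F t ≤ ∫ t in (0:ℝ)..1, U t := by
      apply intervalIntegral.integral_mono_ae_restrict zero_le_one hF_int hU_int
      filter_upwards [ae_restrict_mem measurableSet_Icc, ae_restrict_of_ae hne_ae] with t ht hts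
      exact hF_upper t ht hts
    refine le_trans hIle ?_
    rw [hU_val]
    have h1 : x ^ a₀ + y ^ a₀ ≤ 2 * s ^ a₀ := by
      have hx' : x ^ a₀ ≤ s ^ a₀ :=
        Real.rpow_le_rpow hx (by rw [hsdef]; linarith) ha₀_pos.le
      have hy' : y ^ a₀ ≤ s ^ a₀ :=
        Real.rpow_le_rpow hy (by rw [hsdef]; linarith) ha₀_pos.le
      linarith
    have heq : K * (2 * s ^ a₀ / (a₀ * s)) = 2 / a₀ * (a s / s) := by
      rw [hKdef]
      have h2 : (0:ℝ) < s ^ a₀ := Real.rpow_pos_of_pos hs a₀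
      generalize hP : (s:ℝ) ^ a₀ = P at h2 ⊢
      field_simp
    calc K * ((x ^ a₀ + y ^ a₀) / (a₀ * s)) ≤ K * (2 * s ^ a₀ / (a₀ * s)) := by gcongr
      _ = 2 / a₀ * (a s / s) := heq
end

section
/- For n ≥ 2 there exists a positive constant C, depending only on n and a₀, such that for all X, Y ∈ ℝⁿ: |A(|X|) − A(|Y|)| ≤ C·|X − Y|·a(|X| + |Y|). -/
open Real MeasureTheory

/-- Inequality (2.2): there is `C > 0` (depending only on `n` and `a₀`) with
`|A(|X|) - A(|Y|)| ≤ C·|X - Y|·a(|X| + |Y|)` for all `X, Y ∈ ℝⁿ`. -/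
theorem stmt_10
    (a : ℝ → ℝ) (a₀ a₁ : ℝ)
    (ha_cont : ContinuousOn a (Set.Ici 0))
    (ha_diff : ∀ t ∈ Set.Ioi (0:ℝ), DifferentiableAt ℝ a t)
    (ha_deriv_cont : ContinuousOn (deriv a) (Set.Ioi 0))
    (ha_zero : a 0 = 0)
    (ha_pos : ∀ t > 0, 0 < a t)
    (ha₀_pos : 0 < a₀) (ha₀_lt : a₀ < 1) (ha₁_gt : 1 < a₁)
    (hcond : ∀ t > 0, a₀ ≤ t * deriv a t / a t ∧ t * deriv a t / a t ≤ a₁)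
    (A : ℝ → ℝ) (hA : ∀ t, A t = ∫ s in (0:ℝ)..t, a s)
    (n : ℕ) (hn : 2 ≤ n) :
    ∃ C : ℝ, 0 < C ∧
      ∀ X Y : EuclideanSpace ℝ (Fin n),
        |A ‖X‖ - A ‖Y‖| ≤ C * ‖X - Y‖ * a (‖X‖ + ‖Y‖) := by
  have ha_nonneg : ∀ t, 0 ≤ t → 0 ≤ a t := by
    intro t ht
    rcases ht.eq_or_lt with h | h
    · simp [← h, ha_zero]
    · exact (ha_pos t h).le
  have ha_mono : MonotoneOn a (Set.Ici 0) := by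
    apply monotoneOn_of_deriv_nonneg (convex_Ici 0) ha_cont
    · intro t ht
      rw [interior_Ici] at ht
      exact (ha_diff t ht).differentiableWithinAt
    · intro t ht
      rw [interior_Ici] at ht
      have h1 := (hcond t ht).1
      have h2 := ha_pos t ht
      have htd : 0 < t * deriv a t := by
        have := mul_pos (lt_of_lt_of_le ha₀_pos h1) h2
        rwa [div_mul_cancel₀ _ h2.ne'] at this
      nlinarith [htd, Set.mem_Ioi.mp ht]
  have ha_int : ∀ s r : ℝ, 0 ≤ s → s ≤ r →
      IntervalIntegrable a MeasureTheory.volume s r := by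
    intro s r hs hsr
    apply ContinuousOn.intervalIntegrable
    apply ha_cont.mono
    rw [Set.uIcc_of_le hsr]
    intro x hx
    exact le_trans hs hx.1
  have key : ∀ r s : ℝ, 0 ≤ s → s ≤ r →
      0 ≤ A r - A s ∧ A r - A s ≤ (r - s) * a (r + s) := by
    intro r s hs hsr
    have hr : 0 ≤ r := le_trans hs hsr
    have hAdiff : A r - A s = ∫ x in s..r, a x := by
      rw [hA, hA, intervalIntegral.integral_interval_sub_left
        (ha_int 0 r le_rfl hr) (ha_int 0 s le_rfl hs)]
    constructor
    · rw [hAdiff]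
      apply intervalIntegral.integral_nonneg hsr
      intro x hx
      exact ha_nonneg x (le_trans hs hx.1)
    · rw [hAdiff]
      have : (∫ x in s..r, a x) ≤ ∫ _x in s..r, a (r + s) := by
        apply intervalIntegral.integral_mono_on hsr (ha_int s r hs hsr)
          intervalIntegrable_const
        intro x hx
        apply ha_mono (Set.mem_Ici.mpr (le_trans hs hx.1))
          (Set.mem_Ici.mpr (by linarith [hx.2]))
        linarith [hx.2]
      simpa using this
  refine ⟨1, one_pos, ?_⟩
  intro X Y
  have hnorm : |‖X‖ - ‖Y‖| ≤ ‖X - Y‖ := abs_norm_sub_norm_le X Y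
  have haXY : 0 ≤ a (‖X‖ + ‖Y‖) := ha_nonneg _ (by positivity)
  rcases le_total ‖Y‖ ‖X‖ with h | h
  · obtain ⟨h1, h2⟩ := key ‖X‖ ‖Y‖ (norm_nonneg Y) h
    rw [abs_of_nonneg h1, one_mul]
    calc A ‖X‖ - A ‖Y‖ ≤ (‖X‖ - ‖Y‖) * a (‖X‖ + ‖Y‖) := h2
      _ ≤ ‖X - Y‖ * a (‖X‖ + ‖Y‖) := by
          apply mul_le_mul_of_nonneg_right _ haXY
          calc ‖X‖ - ‖Y‖ ≤ |‖X‖ - ‖Y‖| := le_abs_self _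
            _ ≤ ‖X - Y‖ := hnorm
  · obtain ⟨h1, h2⟩ := key ‖Y‖ ‖X‖ (norm_nonneg X) h
    rw [abs_sub_comm, abs_of_nonneg h1, one_mul]
    calc A ‖Y‖ - A ‖X‖ ≤ (‖Y‖ - ‖X‖) * a (‖Y‖ + ‖X‖) := h2
      _ ≤ ‖X - Y‖ * a (‖X‖ + ‖Y‖) := by
          rw [add_comm ‖Y‖ ‖X‖]
          apply mul_le_mul_of_nonneg_right _ haXY
          calc ‖Y‖ - ‖X‖ ≤ |‖X‖ - ‖Y‖| := by rw [abs_sub_comm]; exact le_abs_self _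
            _ ≤ ‖X - Y‖ := hnorm
end

section
/- For every δ ∈ (0, 1) and all s, t ≥ 0, one has s·a(t) ≤ ((1 + a₁)/δ^{a₁(1+a₁)})·A(s) + (1 + a₁)·δ^{a₀+1}·A(t). -/
open Real MeasureTheory

/-- Inequality (2.3): for every `δ ∈ (0,1)` and all `s, t ≥ 0`,
`s·a(t) ≤ ((1+a₁)/δ^{a₁(1+a₁)})·A(s) + (1+a₁)·δ^{a₀+1}·A(t)`. -/
theorem stmt_11
    (a : ℝ → ℝ) (a₀ a₁ : ℝ)
    (ha_cont : ContinuousOn a (Set.Ici 0))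
    (ha_diff : ∀ t ∈ Set.Ioi (0:ℝ), DifferentiableAt ℝ a t)
    (ha_deriv_cont : ContinuousOn (deriv a) (Set.Ioi 0))
    (ha_zero : a 0 = 0)
    (ha_pos : ∀ t > 0, 0 < a t)
    (ha₀_pos : 0 < a₀) (ha₀_lt : a₀ < 1) (ha₁_gt : 1 < a₁)
    (hcond : ∀ t > 0, a₀ ≤ t * deriv a t / a t ∧ t * deriv a t / a t ≤ a₁)
    (A : ℝ → ℝ) (hA : ∀ t, A t = ∫ s in (0:ℝ)..t, a s) :
    ∀ δ ∈ Set.Ioo (0:ℝ) 1, ∀ s ≥ (0:ℝ), ∀ t ≥ (0:ℝ),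
      s * a t ≤ ((1 + a₁) / δ ^ (a₁ * (1 + a₁))) * A s
        + (1 + a₁) * δ ^ (a₀ + 1) * A t := by
  have ha₁_pos : (0:ℝ) < a₁ := by linarith
  -- a is nonnegative on [0,∞)
  have ha_nonneg : ∀ t ≥ (0:ℝ), 0 ≤ a t := by
    intro t ht
    rcases eq_or_lt_of_le ht with h | h
    · rw [← h, ha_zero]
    · exact (ha_pos t h).le
  -- a is monotone on [0,∞)
  have hmono : MonotoneOn a (Set.Ici 0) := by
    apply ((strictMonoOn_of_deriv_pos (convex_Ici 0) ha_cont ?_)).monotoneOn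
    intro u hu
    rw [interior_Ici] at hu
    have hau := ha_pos u hu
    have h1 := (hcond u hu).1
    have : a₀ * a u ≤ u * deriv a u := by
      rw [le_div_iff₀ hau] at h1; linarith
    have hpos : 0 < u * deriv a u := lt_of_lt_of_le (by positivity) this
    by_contra hle
    push_neg at hle
    have hu' : (0:ℝ) < u := hu
    nlinarith [mul_nonneg hu'.le (neg_nonneg.2 hle)]
  -- the key comparison: a y * x^a₁ ≤ a x * y^a₁ for 0 < x ≤ y
  have hratio : ∀ x y : ℝ, 0 < x → x ≤ y → a y * x ^ a₁ ≤ a x * y ^ a₁ := by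
    intro x y hx hxy
    have hanti : AntitoneOn (fun u => a u / u ^ a₁) (Set.Ioi 0) := by
      apply antitoneOn_of_deriv_nonpos (convex_Ioi 0)
      · apply ContinuousOn.div (ha_cont.mono (Set.Ioi_subset_Ici le_rfl))
        · exact fun u hu => (Real.continuousAt_rpow_const u a₁
            (Or.inl (ne_of_gt hu))).continuousWithinAt
        · intro u hu
          exact ne_of_gt (Real.rpow_pos_of_pos hu a₁)
      · rw [interior_Ioi]
        intro u hu
        have hu' : (0:ℝ) < u := hu
        exact ((ha_diff u hu).div ((Real.hasDerivAt_rpow_const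
          (Or.inl (ne_of_gt hu'))).differentiableAt) (ne_of_gt
          (Real.rpow_pos_of_pos hu' a₁))).differentiableWithinAt
      · rw [interior_Ioi]
        intro u hu
        have hu' : (0:ℝ) < u := hu
        have hau := ha_pos u hu'
        have hd : HasDerivAt (fun v => a v / v ^ a₁)
            ((deriv a u * u ^ a₁ - a u * (a₁ * u ^ (a₁ - 1))) / (u ^ a₁) ^ 2) u :=
          (ha_diff u hu').hasDerivAt.div
            (Real.hasDerivAt_rpow_const (Or.inl (ne_of_gt hu')))
            (ne_of_gt (Real.rpow_pos_of_pos hu' a₁))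
        rw [hd.deriv]
        have hU : 0 < u ^ a₁ := Real.rpow_pos_of_pos hu' a₁
        have h2 := (hcond u hu').2
        have hkey : u * deriv a u ≤ a₁ * a u := by
          rw [div_le_iff₀ hau] at h2; linarith
        apply div_nonpos_of_nonpos_of_nonneg _ (by positivity)
        rw [sub_nonpos]
        have hsub : u ^ (a₁ - 1) = u ^ a₁ / u := Real.rpow_sub_one (ne_of_gt hu') a₁
        rw [hsub]
        rw [show a u * (a₁ * (u ^ a₁ / u)) = a₁ * a u * u ^ a₁ / u by ring,
          le_div_iff₀ hu']
        calc deriv a u * u ^ a₁ * u = (u * deriv a u) * u ^ a₁ := by ring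
          _ ≤ (a₁ * a u) * u ^ a₁ := mul_le_mul_of_nonneg_right hkey hU.le
    have hy : (0:ℝ) < y := lt_of_lt_of_le hx hxy
    have := hanti (Set.mem_Ioi.mpr hx) (Set.mem_Ioi.mpr hy) hxy
    rw [div_le_div_iff₀ (Real.rpow_pos_of_pos hy a₁) (Real.rpow_pos_of_pos hx a₁)] at this
    exact this
  -- A is nonnegative and t * a t ≤ (1+a₁) * A t
  have hint : ∀ t ≥ (0:ℝ), IntervalIntegrable a MeasureTheory.volume 0 t := by
    intro t ht
    apply ContinuousOn.intervalIntegrable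
    rw [Set.uIcc_of_le ht]
    exact ha_cont.mono (fun u hu => hu.1)
  have hA_nonneg : ∀ t ≥ (0:ℝ), 0 ≤ A t := by
    intro t ht
    rw [hA]
    exact intervalIntegral.integral_nonneg ht (fun u hu => ha_nonneg u hu.1)
  have hbound : ∀ t ≥ (0:ℝ), t * a t ≤ (1 + a₁) * A t := by
    intro t ht
    rcases eq_or_lt_of_le ht with h | h
    · rw [← h, ha_zero]
      simp
      nlinarith [hA_nonneg 0 le_rfl]
    · have hT : 0 < t ^ a₁ := Real.rpow_pos_of_pos h a₁
      have hlow : ∀ u ∈ Set.Icc (0:ℝ) t, u ^ a₁ * (a t / t ^ a₁) ≤ a u := by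
        intro u hu
        rcases eq_or_lt_of_le hu.1 with h0 | h0
        · rw [← h0, Real.zero_rpow (ne_of_gt ha₁_pos), zero_mul, ha_zero]
        · calc u ^ a₁ * (a t / t ^ a₁) = a t * u ^ a₁ / t ^ a₁ := by ring
            _ ≤ a u := by rw [div_le_iff₀ hT]; linarith [hratio u t h0 hu.2]
      have hcont_low : Continuous fun u : ℝ => u ^ a₁ * (a t / t ^ a₁) :=
        (continuous_id.rpow_const (fun x => Or.inr ha₁_pos.le)).mul continuous_const
      have hcomp : (∫ u in (0:ℝ)..t, u ^ a₁ * (a t / t ^ a₁)) ≤ ∫ u in (0:ℝ)..t, a u :=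
        intervalIntegral.integral_mono_on ht (hcont_low.intervalIntegrable 0 t)
          (hint t ht) hlow
      have hval : (∫ u in (0:ℝ)..t, u ^ a₁ * (a t / t ^ a₁)) = t * a t / (1 + a₁) := by
        rw [intervalIntegral.integral_mul_const, integral_rpow (Or.inl (by linarith : (-1:ℝ) < a₁))]
        rw [Real.zero_rpow (by positivity : a₁ + 1 ≠ 0),
          Real.rpow_add h a₁ 1, Real.rpow_one]
        field_simp
        ring
      rw [hval, div_le_iff₀ (by linarith : (0:ℝ) < 1 + a₁), ← hA t] at hcomp
      linarith
  -- main proof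
  intro δ hδ s hs t ht
  obtain ⟨hδ0, hδ1⟩ := hδ
  have hAs := hA_nonneg s hs
  have hAt := hA_nonneg t ht
  have hpow1 : 0 < δ ^ (a₁ * (1 + a₁)) := Real.rpow_pos_of_pos hδ0 _
  have hpow2 : 0 < δ ^ (a₀ + 1) := Real.rpow_pos_of_pos hδ0 _
  rcases eq_or_lt_of_le ht with h0 | h0
  · rw [← h0, ha_zero, mul_zero]
    have h1 : 0 ≤ ((1 + a₁) / δ ^ (a₁ * (1 + a₁))) * A s := by positivity
    have h2 : 0 ≤ (1 + a₁) * δ ^ (a₀ + 1) * A (0:ℝ) := by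
      have := hA_nonneg 0 le_rfl; positivity
    linarith
  · set c := δ ^ (1 + a₁) with hc
    have hc0 : 0 < c := Real.rpow_pos_of_pos hδ0 _
    have hc1 : c ≤ 1 := Real.rpow_le_one hδ0.le hδ1.le (by linarith)
    have hat : 0 < a t := ha_pos t h0
    by_cases hcase : s ≤ c * t
    · have step1 : s * a t ≤ c * (t * a t) := by
        calc s * a t ≤ c * t * a t := mul_le_mul_of_nonneg_right hcase hat.le
          _ = c * (t * a t) := by ring
      have step2 : c * (t * a t) ≤ c * ((1 + a₁) * A t) :=
        mul_le_mul_of_nonneg_left (hbound t ht) hc0.le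
      have hcle : c ≤ δ ^ (a₀ + 1) :=
        Real.rpow_le_rpow_of_exponent_ge hδ0 hδ1.le (by linarith)
      have step3 : c * ((1 + a₁) * A t) ≤ (1 + a₁) * δ ^ (a₀ + 1) * A t := by
        have : c * ((1 + a₁) * A t) ≤ δ ^ (a₀ + 1) * ((1 + a₁) * A t) :=
          mul_le_mul_of_nonneg_right hcle (by positivity)
        linarith [this]
      have h1 : 0 ≤ ((1 + a₁) / δ ^ (a₁ * (1 + a₁))) * A s := by positivity
      linarith
    · push_neg at hcase
      have hs0 : 0 < s := lt_of_le_of_lt (by positivity) hcase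
      have hsc : s ≤ s / c := by
        rw [le_div_iff₀ hc0]; nlinarith
      have htsc : t ≤ s / c := by
        rw [le_div_iff₀ hc0]; nlinarith
      have hmono1 : a t ≤ a (s / c) :=
        hmono (Set.mem_Ici.mpr ht) (Set.mem_Ici.mpr (by positivity)) htsc
      have hS : 0 < s ^ a₁ := Real.rpow_pos_of_pos hs0 a₁
      have hC : 0 < c ^ a₁ := Real.rpow_pos_of_pos hc0 a₁
      have hr := hratio s (s / c) hs0 hsc
      have hdiv : (s / c) ^ a₁ = s ^ a₁ / c ^ a₁ := Real.div_rpow hs0.le hc0.le a₁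
      rw [hdiv] at hr
      have h2 : a (s / c) ≤ a s / c ^ a₁ := by
        have heq : a s * (s ^ a₁ / c ^ a₁) = (a s / c ^ a₁) * s ^ a₁ := by ring
        exact le_of_mul_le_mul_right (heq ▸ hr) hS
      have hcpow : c ^ a₁ = δ ^ (a₁ * (1 + a₁)) := by
        rw [hc, ← Real.rpow_mul hδ0.le, mul_comm]
      have step : s * a t ≤ (1 + a₁) * A s / c ^ a₁ := by
        calc s * a t ≤ s * a (s / c) := mul_le_mul_of_nonneg_left hmono1 hs0.le
          _ ≤ s * (a s / c ^ a₁) := mul_le_mul_of_nonneg_left h2 hs0.le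
          _ = s * a s / c ^ a₁ := by ring
          _ ≤ (1 + a₁) * A s / c ^ a₁ := (div_le_div_iff_of_pos_right hC).mpr (hbound s hs)
      have h2' : 0 ≤ (1 + a₁) * δ ^ (a₀ + 1) * A t := by positivity
      have : (1 + a₁) * A s / c ^ a₁ = ((1 + a₁) / δ ^ (a₁ * (1 + a₁))) * A s := by
        rw [← hcpow]; ring
      linarith [this ▸ step]
end

section
/- For n ≥ 2 there exists a positive constant C, depending only on n, a₀ and a₁, such that for every δ ∈ (0, 1) and all X, Y ∈ ℝⁿ: |A(|X|) − A(|Y|)| ≤ (C/δ^{a₁(1+a₁)})·A(|X − Y|) + C·δ^{a₀+1}·A(|X| + |Y|). -/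
open Real MeasureTheory

set_option maxHeartbeats 1000000

/-- Inequality (2.4): there is `C > 0` (depending only on `n, a₀, a₁`) such that for all
`δ ∈ (0,1)` and `X, Y ∈ ℝⁿ`,
`|A(|X|) - A(|Y|)| ≤ (C/δ^{a₁(1+a₁)})·A(|X-Y|) + C·δ^{a₀+1}·A(|X|+|Y|)`. -/
theorem stmt_12
    (a : ℝ → ℝ) (a₀ a₁ : ℝ)
    (ha_cont : ContinuousOn a (Set.Ici 0))
    (ha_diff : ∀ t ∈ Set.Ioi (0:ℝ), DifferentiableAt ℝ a t)
    (ha_deriv_cont : ContinuousOn (deriv a) (Set.Ioi 0))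
    (ha_zero : a 0 = 0)
    (ha_pos : ∀ t > 0, 0 < a t)
    (ha₀_pos : 0 < a₀) (ha₀_lt : a₀ < 1) (ha₁_gt : 1 < a₁)
    (hcond : ∀ t > 0, a₀ ≤ t * deriv a t / a t ∧ t * deriv a t / a t ≤ a₁)
    (A : ℝ → ℝ) (hA : ∀ t, A t = ∫ s in (0:ℝ)..t, a s)
    (n : ℕ) (hn : 2 ≤ n) :
    ∃ C : ℝ, 0 < C ∧
      ∀ δ ∈ Set.Ioo (0:ℝ) 1, ∀ X Y : EuclideanSpace ℝ (Fin n),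
        |A ‖X‖ - A ‖Y‖| ≤ (C / δ ^ (a₁ * (1 + a₁))) * A ‖X - Y‖
          + C * δ ^ (a₀ + 1) * A (‖X‖ + ‖Y‖) := by
  have hA' : A = fun t => ∫ s in (0:ℝ)..t, a s := funext hA
  subst hA'
  have ha₁_pos : (0:ℝ) < a₁ := lt_trans one_pos ha₁_gt
  -- a' > 0 on (0,∞)
  have hderiv_pos : ∀ t > (0:ℝ), 0 < deriv a t := by
    intro t ht
    have h1 := (hcond t ht).1
    have h2 := ha_pos t ht
    have h3 : a₀ * a t ≤ t * deriv a t := (le_div_iff₀ h2).mp h1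
    nlinarith [mul_pos ha₀_pos h2]
  -- a is monotone on [0,∞)
  have ha_mono : MonotoneOn a (Set.Ici 0) := by
    apply monotoneOn_of_deriv_nonneg (convex_Ici 0) ha_cont
    · intro x hx
      rw [interior_Ici] at hx
      exact (ha_diff x hx).differentiableWithinAt
    · intro x hx
      rw [interior_Ici] at hx
      exact (hderiv_pos x hx).le
  have ha_nonneg : ∀ t : ℝ, 0 ≤ t → 0 ≤ a t := by
    intro t ht
    rcases ht.lt_or_eq with h | h
    · exact (ha_pos t h).le
    · rw [← h, ha_zero]
  -- ratio bound : for 0 < s ≤ t, a t ≤ (t/s)^a₁ * a s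
  have hratio : ∀ s t : ℝ, 0 < s → s ≤ t → a t ≤ (t / s) ^ a₁ * a s := by
    intro s t hs hst
    rcases eq_or_lt_of_le hst with rfl | hst'
    · rw [div_self (ne_of_gt hs), Real.one_rpow, one_mul]
    set F : ℝ → ℝ := fun x => a₁ * Real.log x - Real.log (a x) with hF
    have hFd : ∀ x : ℝ, 0 < x → HasDerivAt F (a₁ * x⁻¹ - (a x)⁻¹ * deriv a x) x := by
      intro x hx
      have h1 : HasDerivAt (fun y => a₁ * Real.log y) (a₁ * x⁻¹) x := by
        simpa [mul_comm] using (Real.hasDerivAt_log (ne_of_gt hx)).const_mul a₁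
      have h2 : HasDerivAt (fun y => Real.log (a y)) ((a x)⁻¹ * deriv a x) x :=
        (Real.hasDerivAt_log (ne_of_gt (ha_pos x hx))).comp x (ha_diff x hx).hasDerivAt
      exact h1.sub h2
    have hmono : MonotoneOn F (Set.Icc s t) := by
      apply monotoneOn_of_deriv_nonneg (convex_Icc s t)
      · intro x hx
        exact (hFd x (lt_of_lt_of_le hs hx.1)).continuousAt.continuousWithinAt
      · intro x hx
        rw [interior_Icc] at hx
        exact ((hFd x (hs.trans hx.1)).differentiableAt).differentiableWithinAt
      · intro x hx
        rw [interior_Icc] at hx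
        have hx0 : (0:ℝ) < x := hs.trans hx.1
        rw [(hFd x hx0).deriv]
        have hax := ha_pos x hx0
        have h2 := (hcond x hx0).2
        have key : x * deriv a x ≤ a₁ * a x := by
          have := (div_le_iff₀ hax).mp h2
          linarith
        have e1 : a₁ * x⁻¹ - (a x)⁻¹ * deriv a x
            = (a₁ * a x - x * deriv a x) * (x⁻¹ * (a x)⁻¹) := by
          field_simp
        rw [e1]
        have h9 : (0:ℝ) ≤ a₁ * a x - x * deriv a x := by linarith
        exact mul_nonneg h9 (by positivity)
    have hFst : F s ≤ F t :=
      hmono ⟨le_rfl, hst⟩ ⟨hst, le_rfl⟩ hst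
    have hat := ha_pos t (hs.trans_le hst)
    have has := ha_pos s hs
    have hlog : Real.log (a t) ≤ Real.log (a s) + a₁ * (Real.log t - Real.log s) := by
      simp only [hF] at hFst
      linarith
    calc a t = Real.exp (Real.log (a t)) := (Real.exp_log hat).symm
      _ ≤ Real.exp (Real.log (a s) + a₁ * (Real.log t - Real.log s)) :=
          Real.exp_le_exp.mpr hlog
      _ = (t / s) ^ a₁ * a s := by
          have ht0 : (0:ℝ) < t := hs.trans_le hst
          rw [Real.exp_add, Real.exp_log has,
            Real.rpow_def_of_pos (div_pos ht0 hs),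
            Real.log_div ht0.ne' (ne_of_gt hs), mul_comm]
          ring_nf
  -- interval integrability
  have hInt : ∀ u v : ℝ, 0 ≤ u → 0 ≤ v → IntervalIntegrable a volume u v := by
    intro u v hu hv
    apply ContinuousOn.intervalIntegrable
    apply ha_cont.mono
    intro x hx
    rw [Set.uIcc] at hx
    exact le_trans (le_inf hu hv) hx.1
  set A : ℝ → ℝ := fun t => ∫ s in (0:ℝ)..t, a s with hAdef
  have hAsplit : ∀ u v : ℝ, 0 ≤ u → 0 ≤ v →
      A v = A u + ∫ s in u..v, a s := by
    intro u v hu hv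
    rw [hAdef]
    exact (intervalIntegral.integral_add_adjacent_intervals
      (hInt 0 u le_rfl hu) (hInt u v hu hv)).symm
  have hAmono : ∀ u v : ℝ, 0 ≤ u → u ≤ v → A u ≤ A v := by
    intro u v hu huv
    rw [hAsplit u v hu (hu.trans huv), le_add_iff_nonneg_right]
    apply intervalIntegral.integral_nonneg huv
    intro x hx
    exact ha_nonneg x (hu.trans hx.1)
  have hA0 : A 0 = 0 := intervalIntegral.integral_same
  have hAnonneg : ∀ t : ℝ, 0 ≤ t → 0 ≤ A t := by
    intro t ht
    rw [← hA0]
    exact hAmono 0 t le_rfl ht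
  -- upper bound on increments: A v - A u ≤ a v * (v - u)
  have hAub : ∀ u v : ℝ, 0 ≤ u → u ≤ v → A v - A u ≤ a v * (v - u) := by
    intro u v hu huv
    rw [hAsplit u v hu (hu.trans huv)]
    have : (∫ s in u..v, a s) ≤ ∫ _ in u..v, a v := by
      apply intervalIntegral.integral_mono_on huv (hInt u v hu (hu.trans huv))
        intervalIntegrable_const
      intro x hx
      exact ha_mono (Set.mem_Ici.mpr (hu.trans hx.1))
        (Set.mem_Ici.mpr (hu.trans huv)) hx.2
    rw [intervalIntegral.integral_const, smul_eq_mul] at this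
    linarith [this]
  -- derivative of A
  have hAderiv : ∀ x : ℝ, 0 < x → HasDerivAt A (a x) x := by
    intro x hx
    apply intervalIntegral.integral_hasDerivAt_right (hInt 0 x le_rfl hx.le)
    · exact (ha_cont.mono (Set.Ioi_subset_Ici le_rfl)).stronglyMeasurableAtFilter
        isOpen_Ioi x hx
    · exact ha_cont.continuousAt (Ici_mem_nhds hx)
  -- lower bound : a t * t ≤ (1+a₁) * A t
  have hAlow : ∀ t : ℝ, 0 ≤ t → a t * t ≤ (1 + a₁) * A t := by
    intro t ht
    rcases ht.lt_or_eq with ht | ht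
    swap
    · rw [← ht, ha_zero, hA0]; norm_num
    set h : ℝ → ℝ := fun x => (1 + a₁) * A x - x * a x with hh
    have hhd : ∀ x : ℝ, 0 < x →
        HasDerivAt h ((1 + a₁) * a x - (1 * a x + x * deriv a x)) x := by
      intro x hx
      exact ((hAderiv x hx).const_mul (1 + a₁)).sub
        ((hasDerivAt_id x).mul (ha_diff x hx).hasDerivAt)
    have hhm : ∀ s : ℝ, 0 < s → s ≤ t → h s ≤ h t := by
      intro s hs hst
      have hmono : MonotoneOn h (Set.Icc s t) := by
        apply monotoneOn_of_deriv_nonneg (convex_Icc s t)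
        · intro x hx
          exact (hhd x (lt_of_lt_of_le hs hx.1)).continuousAt.continuousWithinAt
        · intro x hx
          rw [interior_Icc] at hx
          exact ((hhd x (hs.trans hx.1)).differentiableAt).differentiableWithinAt
        · intro x hx
          rw [interior_Icc] at hx
          have hx0 : (0:ℝ) < x := hs.trans hx.1
          rw [(hhd x hx0).deriv]
          have hax := ha_pos x hx0
          have key : x * deriv a x ≤ a₁ * a x := by
            have := (div_le_iff₀ hax).mp (hcond x hx0).2
            linarith
          linarith
      exact hmono ⟨le_rfl, hst⟩ ⟨hst, le_rfl⟩ hst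
    have hhm' : ∀ s : ℝ, 0 < s → s ≤ t →
        (1 + a₁) * A s - s * a s ≤ (1 + a₁) * A t - t * a t := by
      intro s hs hst
      have := hhm s hs hst
      simpa [hh] using this
    by_contra hcon
    push_neg at hcon
    have hat : 0 < a t := ha_pos t ht
    have hcon' : (1 + a₁) * A t < a t * t := hcon
    set ε : ℝ := a t * t - (1 + a₁) * A t with hε
    have hεpos : 0 < ε := by linarith
    set s : ℝ := min t (ε / (2 * a t)) with hs
    have hspos : 0 < s := lt_min ht (by positivity)
    have hsle : s ≤ t := min_le_left _ _
    have h1 : (1 + a₁) * A s - s * a s ≤ (1 + a₁) * A t - t * a t := hhm' s hspos hsle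
    have h2 : a s ≤ a t := ha_mono (Set.mem_Ici.mpr hspos.le) (Set.mem_Ici.mpr ht.le) hsle
    have h3 : 0 ≤ A s := hAnonneg s hspos.le
    have h4 : s * a t ≤ ε / 2 := by
      have hle : s ≤ ε / (2 * a t) := min_le_right _ _
      calc s * a t ≤ (ε / (2 * a t)) * a t :=
            mul_le_mul_of_nonneg_right hle hat.le
        _ = ε / 2 := by field_simp
    have h7 : s * a s ≤ s * a t := mul_le_mul_of_nonneg_left h2 hspos.le
    nlinarith
  -- the constant
  refine ⟨1 + a₁, by linarith, ?_⟩
  have key : ∀ δ ∈ Set.Ioo (0:ℝ) 1, ∀ X Y : EuclideanSpace ℝ (Fin n), ‖Y‖ ≤ ‖X‖ →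
      |A ‖X‖ - A ‖Y‖| ≤ ((1 + a₁) / δ ^ (a₁ * (1 + a₁))) * A ‖X - Y‖
        + (1 + a₁) * δ ^ (a₀ + 1) * A (‖X‖ + ‖Y‖) := by
    rintro δ ⟨hδ0, hδ1⟩ X Y hYX
    set r : ℝ := ‖X‖ with hr
    set r' : ℝ := ‖Y‖ with hr'
    set d : ℝ := ‖X - Y‖ with hd
    set S : ℝ := r + r' with hS
    have hr'0 : 0 ≤ r' := norm_nonneg Y
    have hr0 : 0 ≤ r := norm_nonneg X
    have hd0 : 0 ≤ d := norm_nonneg _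
    have hdS : d ≤ S := norm_sub_le X Y
    have hrS : r ≤ S := by rw [hS]; linarith
    have hrr'd : r - r' ≤ d := by
      have := abs_norm_sub_norm_le X Y
      rw [← hr, ← hr', ← hd] at this
      exact (abs_le.mp this).2
    have hLHS : |A r - A r'| ≤ a r * d := by
      rw [abs_of_nonneg (by linarith [hAmono r' r hr'0 hYX])]
      calc A r - A r' ≤ a r * (r - r') := hAub r' r hr'0 hYX
        _ ≤ a r * d := mul_le_mul_of_nonneg_left hrr'd (ha_nonneg r hr0)
    set ε : ℝ := δ ^ (a₀ + 1) with hεd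
    have hεpos : 0 < ε := Real.rpow_pos_of_pos hδ0 _
    have hεlt1 : ε < 1 := Real.rpow_lt_one hδ0.le hδ1 (by linarith)
    have hT1 : 0 ≤ ((1 + a₁) / δ ^ (a₁ * (1 + a₁))) * A d := by
      have := hAnonneg d hd0
      have hp : (0:ℝ) < δ ^ (a₁ * (1 + a₁)) := Real.rpow_pos_of_pos hδ0 _
      positivity
    have hT2 : 0 ≤ (1 + a₁) * ε * A S := by
      have := hAnonneg S (by linarith)
      positivity
    rcases lt_or_ge d (ε * S) with hcase | hcase
    · -- small difference case
      have haS : a r ≤ a S :=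
        ha_mono (Set.mem_Ici.mpr hr0) (Set.mem_Ici.mpr (hr0.trans hrS)) hrS
      have h1 : a r * d ≤ a S * (ε * S) := by
        apply mul_le_mul haS hcase.le hd0 (ha_nonneg S (hr0.trans hrS))
      have h2 : a S * (ε * S) = ε * (a S * S) := by ring
      have h3 : a S * S ≤ (1 + a₁) * A S := hAlow S (hr0.trans hrS)
      have h4 : a r * d ≤ (1 + a₁) * ε * A S := by
        rw [h2] at h1
        calc a r * d ≤ ε * (a S * S) := h1
          _ ≤ ε * ((1 + a₁) * A S) := mul_le_mul_of_nonneg_left h3 hεpos.le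
          _ = (1 + a₁) * ε * A S := by ring
      linarith [hLHS.trans h4]
    · -- large difference case
      rcases hr0.lt_or_eq with hrpos | hrzero
      swap
      · have hr'z : r' = 0 := le_antisymm (by linarith) hr'0
        rw [← hrzero, ← hr'z, sub_self, abs_zero]
        linarith
      have hdpos : 0 < d := lt_of_lt_of_le (by positivity : (0:ℝ) < ε * r)
        (le_trans (mul_le_mul_of_nonneg_left hrS hεpos.le) hcase)
      have hrd : r ≤ d / ε := by
        rw [le_div_iff₀ hεpos]
        calc r * ε = ε * r := mul_comm _ _
          _ ≤ ε * S := mul_le_mul_of_nonneg_left hrS hεpos.le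
          _ ≤ d := hcase
      have hdd : d ≤ d / ε := by
        rw [le_div_iff₀ hεpos]
        nlinarith [mul_le_mul_of_nonneg_left hεlt1.le hd0]
      have h1 : a r ≤ a (d / ε) :=
        ha_mono (Set.mem_Ici.mpr hr0) (Set.mem_Ici.mpr (hr0.trans hrd)) hrd
      have h2 : a (d / ε) ≤ ((d / ε) / d) ^ a₁ * a d := hratio d (d / ε) hdpos hdd
      have h3 : (d / ε) / d = ε⁻¹ := by
        rw [div_div, mul_comm, ← div_div, div_self hdpos.ne', one_div]
      have h4 : (ε⁻¹ : ℝ) ^ a₁ = δ ^ (-(a₀ + 1) * a₁) := by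
        rw [hεd, ← Real.rpow_neg hδ0.le, ← Real.rpow_mul hδ0.le]
      have h5 : δ ^ (-(a₀ + 1) * a₁) ≤ δ ^ (-(a₁ * (1 + a₁))) := by
        apply Real.rpow_le_rpow_of_exponent_ge hδ0 hδ1.le
        nlinarith
      have h6 : δ ^ (-(a₁ * (1 + a₁))) = 1 / δ ^ (a₁ * (1 + a₁)) := by
        rw [Real.rpow_neg hδ0.le, one_div]
      have had0 : 0 ≤ a d := ha_nonneg d hd0
      have hAd0 : 0 ≤ A d := hAnonneg d hd0
      have hbound : a r * d ≤ (1 / δ ^ (a₁ * (1 + a₁))) * (a d * d) := by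
        have e1 : a r ≤ (1 / δ ^ (a₁ * (1 + a₁))) * a d := by
          calc a r ≤ ((d / ε) / d) ^ a₁ * a d := h1.trans h2
            _ = δ ^ (-(a₀ + 1) * a₁) * a d := by rw [h3, h4]
            _ ≤ (1 / δ ^ (a₁ * (1 + a₁))) * a d := by
                rw [← h6]
                exact mul_le_mul_of_nonneg_right h5 had0
        calc a r * d ≤ ((1 / δ ^ (a₁ * (1 + a₁))) * a d) * d :=
              mul_le_mul_of_nonneg_right e1 hd0
          _ = (1 / δ ^ (a₁ * (1 + a₁))) * (a d * d) := by ring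
      have hfin : a r * d ≤ ((1 + a₁) / δ ^ (a₁ * (1 + a₁))) * A d := by
        have hp : (0:ℝ) < δ ^ (a₁ * (1 + a₁)) := Real.rpow_pos_of_pos hδ0 _
        have := hAlow d hd0
        calc a r * d ≤ (1 / δ ^ (a₁ * (1 + a₁))) * (a d * d) := hbound
          _ ≤ (1 / δ ^ (a₁ * (1 + a₁))) * ((1 + a₁) * A d) := by
              apply mul_le_mul_of_nonneg_left this
              positivity
          _ = ((1 + a₁) / δ ^ (a₁ * (1 + a₁))) * A d := by ring
      linarith [hLHS.trans hfin]
  intro δ hδ X Y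
  rcases le_total ‖Y‖ ‖X‖ with h | h
  · exact key δ hδ X Y h
  · have := key δ hδ Y X h
    rw [abs_sub_comm, norm_sub_rev, add_comm ‖X‖ ‖Y‖]
    exact this
end

section
/- For n ≥ 2 there exist positive constants C₃ and C₄, depending only on n, a₀ and a₁, such that for every δ ∈ (0, 1) and all X, Y ∈ ℝⁿ: |A(|X|) − A(|Y|)| ≤ (C₃/δ^{a₁(1+a₁)})·A(|X − Y|) + C₄·δ^{a₀+1}·(A(|X|) + A(|Y|)). -/
open Real MeasureTheory

/-- Lemma 2.8: there are `C₃, C₄ > 0` (depending only on `n, a₀, a₁`) such that for all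
`δ ∈ (0,1)` and `X, Y ∈ ℝⁿ`,
`|A(|X|) - A(|Y|)| ≤ (C₃/δ^{a₁(1+a₁)})·A(|X-Y|) + C₄·δ^{a₀+1}·(A(|X|)+A(|Y|))`. -/
theorem stmt_13
    (a : ℝ → ℝ) (a₀ a₁ : ℝ)
    (ha_cont : ContinuousOn a (Set.Ici 0))
    (ha_diff : ∀ t ∈ Set.Ioi (0:ℝ), DifferentiableAt ℝ a t)
    (ha_deriv_cont : ContinuousOn (deriv a) (Set.Ioi 0))
    (ha_zero : a 0 = 0)
    (ha_pos : ∀ t > 0, 0 < a t)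
    (ha₀_pos : 0 < a₀) (ha₀_lt : a₀ < 1) (ha₁_gt : 1 < a₁)
    (hcond : ∀ t > 0, a₀ ≤ t * deriv a t / a t ∧ t * deriv a t / a t ≤ a₁)
    (A : ℝ → ℝ) (hA : ∀ t, A t = ∫ s in (0:ℝ)..t, a s)
    (n : ℕ) (hn : 2 ≤ n) :
    ∃ C₃ C₄ : ℝ, 0 < C₃ ∧ 0 < C₄ ∧
      ∀ δ ∈ Set.Ioo (0:ℝ) 1, ∀ X Y : EuclideanSpace ℝ (Fin n),
        |A ‖X‖ - A ‖Y‖| ≤ (C₃ / δ ^ (a₁ * (1 + a₁))) * A ‖X - Y‖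
          + C₄ * δ ^ (a₀ + 1) * (A ‖X‖ + A ‖Y‖) := by
  have ha1_pos : (0:ℝ) < 1 + a₁ := by linarith
  have ha_nonneg : ∀ t : ℝ, 0 ≤ t → 0 ≤ a t := by
    intro t ht
    rcases ht.lt_or_eq with h | h
    · exact (ha_pos t h).le
    · rw [← h, ha_zero]
  have ha_contOn : ContinuousOn a (Set.Ioi 0) :=
    fun t ht => ((ha_diff t ht).continuousAt).continuousWithinAt
  have haInt : ∀ x y : ℝ, 0 ≤ x → 0 ≤ y → IntervalIntegrable a volume x y := by
    intro x y hx hy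
    apply (ha_cont.mono ?_).intervalIntegrable
    intro t ht
    rw [Set.mem_uIcc] at ht
    simp only [Set.mem_Ici]
    rcases ht with ht | ht
    · linarith [ht.1]
    · linarith [ht.1]
  have hAx : ∀ x y : ℝ, 0 ≤ y → y ≤ x → A x - A y = ∫ s in y..x, a s := by
    intro x y hy hyx
    rw [hA x, hA y,
      ← intervalIntegral.integral_add_adjacent_intervals (haInt 0 y le_rfl hy)
        (haInt y x hy (hy.trans hyx))]
    ring
  have hA0 : A 0 = 0 := by rw [hA]; simp
  have hAmono : ∀ x y : ℝ, 0 ≤ y → y ≤ x → A y ≤ A x := by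
    intro x y hy hyx
    have h := hAx x y hy hyx
    have h2 : 0 ≤ ∫ s in y..x, a s :=
      intervalIntegral.integral_nonneg hyx (fun u hu => ha_nonneg u (hy.trans hu.1))
    linarith
  have hA_nonneg : ∀ x : ℝ, 0 ≤ x → 0 ≤ A x := by
    intro x hx
    have := hAmono x 0 le_rfl hx
    rw [hA0] at this; exact this
  have hderiv_a_nonneg : ∀ t ∈ Set.Ioi (0:ℝ), 0 ≤ deriv a t := by
    intro t ht
    have h := (hcond t ht).1
    have hat := ha_pos t ht
    rw [le_div_iff₀ hat] at h
    have ht' : (0:ℝ) < t := ht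
    nlinarith
  have ha_mono : MonotoneOn a (Set.Ici 0) := by
    apply monotoneOn_of_deriv_nonneg (convex_Ici 0) ha_cont
    · intro t ht
      rw [interior_Ici] at ht
      exact (ha_diff t ht).differentiableWithinAt
    · intro t ht
      rw [interior_Ici] at ht
      exact hderiv_a_nonneg t ht
  have hA_deriv : ∀ x ∈ Set.Ioi (0:ℝ), HasDerivAt A (a x) x := by
    intro x hx
    have hAe : A = fun u => ∫ s in (0:ℝ)..u, a s := funext hA
    rw [hAe]
    exact intervalIntegral.integral_hasDerivAt_right (haInt 0 x le_rfl (le_of_lt hx))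
      (ContinuousOn.stronglyMeasurableAtFilter isOpen_Ioi ha_contOn x hx)
      (ha_diff x hx).continuousAt
  -- key1 : x * a x ≤ (1+a₁) * A x
  have key1 : ∀ x : ℝ, 0 < x → x * a x ≤ (1 + a₁) * A x := by
    set g : ℝ → ℝ := fun t => (1 + a₁) * A t - t * a t with hg
    have hgderiv : ∀ t ∈ Set.Ioi (0:ℝ),
        HasDerivAt g ((1 + a₁) * a t - (1 * a t + t * deriv a t)) t := by
      intro t ht
      exact ((hA_deriv t ht).const_mul _).sub
        ((hasDerivAt_id t).mul ((ha_diff t ht).hasDerivAt))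
    have hg_mono : MonotoneOn g (Set.Ioi 0) := by
      apply monotoneOn_of_deriv_nonneg (convex_Ioi 0)
      · exact fun t ht => (hgderiv t ht).continuousAt.continuousWithinAt
      · intro t ht
        rw [interior_Ioi] at ht
        exact (hgderiv t ht).differentiableAt.differentiableWithinAt
      · intro t ht
        rw [interior_Ioi] at ht
        rw [(hgderiv t ht).deriv]
        have h2 := (hcond t ht).2
        have hat := ha_pos t ht
        rw [div_le_iff₀ hat] at h2
        nlinarith
    have hlim_a : Filter.Tendsto a (nhdsWithin 0 (Set.Ioi 0)) (nhds 0) := by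
      have h := (ha_cont 0 (by simp : (0:ℝ) ∈ Set.Ici 0))
      rw [ContinuousWithinAt, ha_zero] at h
      exact h.mono_left (nhdsWithin_mono 0 Set.Ioi_subset_Ici_self)
    have hlim_ta : Filter.Tendsto (fun t : ℝ => t * a t) (nhdsWithin 0 (Set.Ioi 0)) (nhds 0) := by
      have h0 : Filter.Tendsto (fun t : ℝ => t) (nhdsWithin 0 (Set.Ioi 0)) (nhds 0) :=
        Filter.tendsto_id.mono_left nhdsWithin_le_nhds
      simpa using h0.mul hlim_a
    have hA_le : ∀ t : ℝ, 0 < t → A t ≤ t * a t := by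
      intro t ht
      rw [hA t]
      calc ∫ s in (0:ℝ)..t, a s ≤ ∫ s in (0:ℝ)..t, a t := by
            apply intervalIntegral.integral_mono_on ht.le (haInt 0 t le_rfl ht.le)
              intervalIntegrable_const
            intro u hu
            exact ha_mono hu.1 ht.le hu.2
        _ = t * a t := by simp
    have hlim_A : Filter.Tendsto A (nhdsWithin 0 (Set.Ioi 0)) (nhds 0) := by
      apply tendsto_of_tendsto_of_tendsto_of_le_of_le' tendsto_const_nhds hlim_ta
      · filter_upwards [self_mem_nhdsWithin] with t ht
        exact hA_nonneg t (le_of_lt ht)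
      · filter_upwards [self_mem_nhdsWithin] with t ht
        exact hA_le t ht
    have hlim_g : Filter.Tendsto g (nhdsWithin 0 (Set.Ioi 0)) (nhds 0) := by
      have h := (hlim_A.const_mul (1 + a₁)).sub hlim_ta
      simpa using h
    intro x hx
    have hge : ∀ᶠ t in nhdsWithin 0 (Set.Ioi 0), g t ≤ g x := by
      filter_upwards [Ioc_mem_nhdsGT_of_mem (Set.mem_Ico.2 ⟨le_rfl, hx⟩)] with t ht
      exact hg_mono ht.1 hx ht.2
    have h0le : (0:ℝ) ≤ g x := le_of_tendsto hlim_g hge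
    simp only [hg] at h0le
    linarith
  -- keyE : A x * r^(1+a₁) ≤ A r * x^(1+a₁) for 0 < r ≤ x
  have keyE : ∀ x r : ℝ, 0 < r → r ≤ x → A x * r ^ ((1:ℝ) + a₁) ≤ A r * x ^ ((1:ℝ) + a₁) := by
    set φ : ℝ → ℝ := fun t => A t / t ^ ((1:ℝ) + a₁) with hφ
    have hφderiv : ∀ t ∈ Set.Ioi (0:ℝ), HasDerivAt φ
        ((a t * t ^ ((1:ℝ) + a₁) - A t * ((1 + a₁) * t ^ ((1:ℝ) + a₁ - 1))) /
          (t ^ ((1:ℝ) + a₁)) ^ 2) t := by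
      intro t ht
      have htpos : (0:ℝ) < t := ht
      exact (hA_deriv t ht).div
        (Real.hasDerivAt_rpow_const (Or.inl (ne_of_gt htpos)))
        (ne_of_gt (Real.rpow_pos_of_pos htpos _))
    have hφ_anti : AntitoneOn φ (Set.Ioi 0) := by
      apply antitoneOn_of_deriv_nonpos (convex_Ioi 0)
      · exact fun t ht => (hφderiv t ht).continuousAt.continuousWithinAt
      · intro t ht
        rw [interior_Ioi] at ht
        exact (hφderiv t ht).differentiableAt.differentiableWithinAt
      · intro t ht
        rw [interior_Ioi] at ht
        have htpos : (0:ℝ) < t := ht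
        rw [(hφderiv t ht).deriv]
        apply div_nonpos_of_nonpos_of_nonneg _ (by positivity)
        have hexp : (1:ℝ) + a₁ - 1 = a₁ := by ring
        have hsplit : t ^ ((1:ℝ) + a₁) = t * t ^ a₁ := by
          rw [Real.rpow_add htpos, Real.rpow_one]
        rw [hexp, hsplit]
        have hpow : (0:ℝ) ≤ t ^ a₁ := Real.rpow_nonneg htpos.le a₁
        nlinarith [key1 t htpos, mul_nonneg (show (0:ℝ) ≤ (1 + a₁) * A t - t * a t by
          linarith [key1 t htpos]) hpow]
    intro x r hr hrx
    have hx0 : (0:ℝ) < x := lt_of_lt_of_le hr hrx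
    have h := hφ_anti (Set.mem_Ioi.2 hr) (Set.mem_Ioi.2 hx0) hrx
    simp only [hφ] at h
    rw [div_le_div_iff₀ (Real.rpow_pos_of_pos hx0 _) (Real.rpow_pos_of_pos hr _)] at h
    linarith
  -- keyF : theta inequality
  have keyF : ∀ δ : ℝ, 0 < δ → δ < 1 → ∀ θ : ℝ, 0 < θ → θ ≤ 1 →
      θ ≤ δ ^ (a₀ + 1) + θ ^ ((1:ℝ) + a₁) / δ ^ (a₁ * (1 + a₁)) := by
    intro δ hδ0 hδ1 θ hθ0 hθ1
    rcases le_or_gt θ (δ ^ (a₀ + 1)) with h | h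
    · have h2 : (0:ℝ) ≤ θ ^ ((1:ℝ) + a₁) / δ ^ (a₁ * (1 + a₁)) := by positivity
      linarith
    · have h1 : δ ^ ((a₀ + 1) * a₁) ≤ θ ^ a₁ := by
        rw [Real.rpow_mul hδ0.le]
        exact Real.rpow_le_rpow (Real.rpow_nonneg hδ0.le _) h.le (by linarith)
      have h2 : δ ^ (a₁ * (1 + a₁)) ≤ δ ^ ((a₀ + 1) * a₁) :=
        Real.rpow_le_rpow_of_exponent_ge hδ0 hδ1.le (by nlinarith)
      have h3 : δ ^ (a₁ * (1 + a₁)) ≤ θ ^ a₁ := h2.trans h1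
      have h4 : θ * δ ^ (a₁ * (1 + a₁)) ≤ θ ^ ((1:ℝ) + a₁) := by
        rw [Real.rpow_add hθ0, Real.rpow_one]
        exact mul_le_mul_of_nonneg_left h3 hθ0.le
      have hδp : (0:ℝ) < δ ^ (a₁ * (1 + a₁)) := Real.rpow_pos_of_pos hδ0 _
      have h5 : θ ≤ θ ^ ((1:ℝ) + a₁) / δ ^ (a₁ * (1 + a₁)) := (le_div_iff₀ hδp).2 h4
      have h6 : (0:ℝ) ≤ δ ^ (a₀ + 1) := (Real.rpow_pos_of_pos hδ0 _).le
      linarith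
  -- main real-variable lemma
  have main : ∀ δ : ℝ, 0 < δ → δ < 1 → ∀ x y r : ℝ, 0 ≤ y → y ≤ x → x - y ≤ r →
      A x - A y ≤ ((1 + a₁) / δ ^ (a₁ * (1 + a₁))) * A r + (1 + a₁) * δ ^ (a₀ + 1) * A x := by
    intro δ hδ0 hδ1 x y r hy hyx hr
    have hx : (0:ℝ) ≤ x := hy.trans hyx
    have hr0 : (0:ℝ) ≤ r := le_trans (by linarith) hr
    have hAr : (0:ℝ) ≤ A r := hA_nonneg r hr0
    have hAxn : (0:ℝ) ≤ A x := hA_nonneg x hx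
    have hAy : (0:ℝ) ≤ A y := hA_nonneg y hy
    have hδp : (0:ℝ) < δ ^ (a₁ * (1 + a₁)) := Real.rpow_pos_of_pos hδ0 _
    have hδa : (0:ℝ) < δ ^ (a₀ + 1) := Real.rpow_pos_of_pos hδ0 _
    have hterm2 : (0:ℝ) ≤ (1 + a₁) * δ ^ (a₀ + 1) * A x := by positivity
    rcases le_or_gt x r with hxr | hrx
    · have h1 : A x ≤ A r := hAmono r x hx hxr
      have hcoef : 1 ≤ (1 + a₁) / δ ^ (a₁ * (1 + a₁)) := by
        rw [le_div_iff₀ hδp]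
        have h2 : δ ^ (a₁ * (1 + a₁)) ≤ 1 :=
          Real.rpow_le_one hδ0.le hδ1.le (by nlinarith)
        linarith
      nlinarith [mul_le_mul_of_nonneg_right hcoef hAr]
    · have hx0 : (0:ℝ) < x := lt_of_le_of_lt hr0 hrx
      rcases eq_or_lt_of_le hr0 with hr' | hr0'
      · have hxy : x = y := by linarith
        rw [hxy, sub_self]
        have h2 : (0:ℝ) ≤ ((1 + a₁) / δ ^ (a₁ * (1 + a₁))) * A r := by positivity
        rw [hxy] at hterm2
        linarith
      · have hstep1 : A x - A y ≤ a x * (x - y) := by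
          rw [hAx x y hy hyx]
          calc ∫ s in y..x, a s ≤ ∫ s in y..x, a x := by
                apply intervalIntegral.integral_mono_on hyx (haInt y x hy hx)
                  intervalIntegrable_const
                intro u hu
                exact ha_mono (hy.trans hu.1) hx hu.2
            _ = a x * (x - y) := by simp [mul_comm]
        have hax_nonneg : (0:ℝ) ≤ a x := ha_nonneg x hx
        have hstep2 : A x - A y ≤ a x * r := by
          have := mul_le_mul_of_nonneg_left hr hax_nonneg
          linarith
        set θ : ℝ := r / x with hθdef
        have hθ0 : 0 < θ := div_pos hr0' hx0
        have hθ1 : θ ≤ 1 := (div_le_one hx0).2 hrx.le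
        have hstep3 : a x * r ≤ (1 + a₁) * A x * θ := by
          have heq : a x * r = (x * a x) * θ := by
            rw [hθdef]; field_simp
          rw [heq, hθdef]
          have := mul_le_mul_of_nonneg_right (key1 x hx0)
            (le_of_lt (div_pos hr0' hx0))
          calc (x * a x) * (r / x) ≤ ((1 + a₁) * A x) * (r / x) := this
            _ = (1 + a₁) * A x * (r / x) := by ring
        have hθin := keyF δ hδ0 hδ1 θ hθ0 hθ1
        have hpow : θ ^ ((1:ℝ) + a₁) * A x ≤ A r := by
          have hE := keyE x r hr0' hrx.le
          have hxp : (0:ℝ) < x ^ ((1:ℝ) + a₁) := Real.rpow_pos_of_pos hx0 _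
          have hθpow : θ ^ ((1:ℝ) + a₁) = r ^ ((1:ℝ) + a₁) / x ^ ((1:ℝ) + a₁) := by
            rw [hθdef, Real.div_rpow hr0'.le hx0.le]
          rw [hθpow, div_mul_eq_mul_div, div_le_iff₀ hxp]
          nlinarith
        have hfinal : (1 + a₁) * A x * θ ≤
            (1 + a₁) * A x * (δ ^ (a₀ + 1) + θ ^ ((1:ℝ) + a₁) / δ ^ (a₁ * (1 + a₁))) :=
          mul_le_mul_of_nonneg_left hθin (by positivity)
        have hlast : (1 + a₁) * A x * (θ ^ ((1:ℝ) + a₁) / δ ^ (a₁ * (1 + a₁))) ≤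
            ((1 + a₁) / δ ^ (a₁ * (1 + a₁))) * A r := by
          calc (1 + a₁) * A x * (θ ^ ((1:ℝ) + a₁) / δ ^ (a₁ * (1 + a₁)))
              = ((1 + a₁) / δ ^ (a₁ * (1 + a₁))) * (θ ^ ((1:ℝ) + a₁) * A x) := by ring
            _ ≤ ((1 + a₁) / δ ^ (a₁ * (1 + a₁))) * A r :=
                mul_le_mul_of_nonneg_left hpow (by positivity)
        have hexpand : (1 + a₁) * A x * (δ ^ (a₀ + 1) + θ ^ ((1:ℝ) + a₁) / δ ^ (a₁ * (1 + a₁)))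
            = (1 + a₁) * δ ^ (a₀ + 1) * A x
              + (1 + a₁) * A x * (θ ^ ((1:ℝ) + a₁) / δ ^ (a₁ * (1 + a₁))) := by ring
        linarith
  -- conclusion
  refine ⟨1 + a₁, 1 + a₁, ha1_pos, ha1_pos, ?_⟩
  rintro δ ⟨hδ0, hδ1⟩ X Y
  have hXY : |‖X‖ - ‖Y‖| ≤ ‖X - Y‖ := abs_norm_sub_norm_le X Y
  have hX0 : (0:ℝ) ≤ ‖X‖ := norm_nonneg _
  have hY0 : (0:ℝ) ≤ ‖Y‖ := norm_nonneg _
  have hAX : (0:ℝ) ≤ A ‖X‖ := hA_nonneg _ hX0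
  have hAY : (0:ℝ) ≤ A ‖Y‖ := hA_nonneg _ hY0
  have hc4 : (0:ℝ) ≤ (1 + a₁) * δ ^ (a₀ + 1) := by positivity
  rcases le_total ‖Y‖ ‖X‖ with hle | hle
  · have hmono := hAmono _ _ hY0 hle
    rw [abs_of_nonneg (by linarith)]
    have h := main δ hδ0 hδ1 ‖X‖ ‖Y‖ ‖X - Y‖ hY0 hle (le_trans (le_abs_self _) hXY)
    have hsplit : (1 + a₁) * δ ^ (a₀ + 1) * (A ‖X‖ + A ‖Y‖)
        = (1 + a₁) * δ ^ (a₀ + 1) * A ‖X‖ + (1 + a₁) * δ ^ (a₀ + 1) * A ‖Y‖ := by ring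
    linarith [mul_nonneg hc4 hAY]
  · have hmono := hAmono _ _ hX0 hle
    rw [abs_of_nonpos (by linarith), neg_sub]
    have hr : ‖Y‖ - ‖X‖ ≤ ‖X - Y‖ := by
      have h2 : |‖Y‖ - ‖X‖| ≤ ‖X - Y‖ := by rw [abs_sub_comm]; exact hXY
      exact le_trans (le_abs_self _) h2
    have h := main δ hδ0 hδ1 ‖Y‖ ‖X‖ ‖X - Y‖ hX0 hle hr
    have hsplit : (1 + a₁) * δ ^ (a₀ + 1) * (A ‖X‖ + A ‖Y‖)
        = (1 + a₁) * δ ^ (a₀ + 1) * A ‖Y‖ + (1 + a₁) * δ ^ (a₀ + 1) * A ‖X‖ := by ring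
    linarith [mul_nonneg hc4 hAX]
end
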